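/- arXiv:1409.1453 — 3 statements merged into one kernel-verified Lean document; each statement's English description precedes it below -/
import Mathlib

section
/- Let A1 ∈ ℍ^{ñ×n}, B1 ∈ ℍ^{ñ×m}, C1 ∈ ℍ^{ñ×p}, D1 ∈ ℍ^{m̃×n}, E1 ∈ ℍ^{m̃×p}, F1 ∈ ℍ^{p̃×n}, G1 ∈ ℍ^{p̃×m} be given quaternion matrices. Then the minimum of r([A1 B1 C1; D1 X E1; F1 G1 Y]) over all X ∈ ℍ^{m̃×m} and Y ∈ ℍ^{p̃×p} equals r([A1 B1 C1]) + r([A1; D1; F1]) + max{ r([A1 C1; D1 E1]) − r([A1 C1]) − r([A1; D1]), r([A1 B1; F1 G1]) − r([A1 B1]) − r([A1; F1]) }; that is, some choice of (X, Y) attains this value and every choice gives a rank at least this value. -/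
open Submodule Module LinearMap

section Helpers
variable {K : Type*} [DivisionRing K]
variable {M M' : Type*} [AddCommGroup M] [AddCommGroup M'] [Module K M] [Module K M']

/-- submodule rank-nullity -/
lemma fr_map_add (f : M →ₗ[K] M') (p : Submodule K M) [FiniteDimensional K M] :
    finrank K (p.map f) + finrank K ↥(p ⊓ ker f) = finrank K p := by
  have h1 := LinearMap.finrank_range_add_finrank_ker (f.domRestrict p)
  rw [LinearMap.range_domRestrict] at h1
  have : LinearMap.ker (f.domRestrict p) = comap p.subtype (p ⊓ ker f) := by
    ext x
    simp [LinearMap.mem_ker, LinearMap.domRestrict_apply]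
  rw [this] at h1
  rwa [(Submodule.comapSubtypeEquivOfLe (inf_le_left : p ⊓ ker f ≤ p)).finrank_eq] at h1

lemma fr_sup_le (p q : Submodule K M) [FiniteDimensional K M] :
    finrank K ↥(p ⊔ q) ≤ finrank K p + finrank K q := by
  have := Submodule.finrank_sup_add_finrank_inf_eq p q
  omega

/-- complement inside a submodule -/
lemma exists_compl_le {p q : Submodule K M} [FiniteDimensional K M] (h : p ≤ q) :
    ∃ r : Submodule K M, r ≤ q ∧ p ⊓ r = ⊥ ∧ p ⊔ r = q ∧
      finrank K p + finrank K r = finrank K q := by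
  obtain ⟨r', hr'⟩ := Submodule.exists_isCompl (comap q.subtype p)
  have hinj : Function.Injective q.subtype := Subtype.val_injective
  have hp : p = (comap q.subtype p).map q.subtype := by
    rw [Submodule.map_comap_subtype, inf_eq_right.2 h]
  have hinf : p ⊓ (r'.map q.subtype) = ⊥ := by
    rw [hp, ← Submodule.map_inf _ hinj, hr'.inf_eq_bot, Submodule.map_bot]
  have hsup : p ⊔ (r'.map q.subtype) = q := by
    rw [hp, ← Submodule.map_sup, hr'.sup_eq_top, Submodule.map_top, range_subtype]
  refine ⟨r'.map q.subtype, map_subtype_le q r', hinf, hsup, ?_⟩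
  have h2 := Submodule.finrank_sup_add_finrank_inf_eq p (r'.map q.subtype)
  rw [hinf, hsup] at h2
  simp only [finrank_bot] at h2
  omega

/-- global linear section of `f` over the submodule `p`. -/
lemma exists_global_section (f : M →ₗ[K] M') (p : Submodule K M) :
    ∃ η : M' →ₗ[K] M, ∀ x ∈ p.map f, η x ∈ p ∧ f (η x) = x := by
  have hmem : ∀ x ∈ p, f x ∈ p.map f := fun x hx => Submodule.mem_map_of_mem hx
  set g : ↥p →ₗ[K] ↥(p.map f) := f.restrict hmem with hg
  have hsurj : Function.Surjective g := by
    rintro ⟨y, hy⟩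
    obtain ⟨x, hx, rfl⟩ := hy
    exact ⟨⟨x, hx⟩, rfl⟩
  obtain ⟨s, hs⟩ := g.exists_rightInverse_of_surjective (range_eq_top.2 hsurj)
  obtain ⟨c, hc⟩ := Submodule.exists_isCompl (p.map f)
  set π := (p.map f).linearProjOfIsCompl c hc
  refine ⟨p.subtype ∘ₗ s ∘ₗ π, ?_⟩
  intro x hx
  have hπ : π x = ⟨x, hx⟩ := Submodule.linearProjOfIsCompl_apply_left hc ⟨x, hx⟩
  constructor
  · simp
  · have hcomp : g (s (π x)) = π x := by
      rw [← LinearMap.comp_apply, hs, LinearMap.id_apply]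
    have h2 : f ((s (π x) : M)) = ((g (s (π x)) : M')) := rfl
    simp only [LinearMap.comp_apply, Submodule.coe_subtype]
    rw [h2, hcomp, hπ]

/-- projections onto P and D given P ⊓ D = ⊥ -/
lemma exists_proj_pair (P D : Submodule K M) (h : P ⊓ D = ⊥) :
    ∃ πP πD : M →ₗ[K] M, (∀ x, πP x ∈ P) ∧ (∀ x, πD x ∈ D) ∧
      (∀ x ∈ P ⊔ D, πP x + πD x = x) ∧ (∀ x ∈ P, πP x = x) ∧ (∀ x ∈ P, πD x = 0) := by
  obtain ⟨q', hq'⟩ := Submodule.exists_isCompl (P ⊔ D)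
  have hdP : Disjoint P (D ⊔ q') := by
    rw [disjoint_iff_inf_le]
    rintro x ⟨hxP, hxDq⟩
    obtain ⟨d, hd, e, he, rfl⟩ := Submodule.mem_sup.1 hxDq
    have : e ∈ (P ⊔ D) ⊓ q' := ⟨by
      have : e = (d + e) - d := by abel
      rw [this]
      exact Submodule.sub_mem _ (Submodule.mem_sup_left hxP) (Submodule.mem_sup_right hd), he⟩
    rw [hq'.inf_eq_bot] at this
    simp only [Submodule.mem_bot] at this
    subst this
    have : d + 0 ∈ P ⊓ D := ⟨by simpa using hxP, by simpa using hd⟩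
    rw [h] at this
    simpa using this
  have hcP : IsCompl P (D ⊔ q') := ⟨hdP, by
    rw [codisjoint_iff, ← sup_assoc, hq'.sup_eq_top]⟩
  have hdD : Disjoint D (P ⊔ q') := by
    rw [disjoint_iff_inf_le]
    rintro x ⟨hxD, hxPq⟩
    obtain ⟨d, hd, e, he, rfl⟩ := Submodule.mem_sup.1 hxPq
    have : e ∈ (P ⊔ D) ⊓ q' := ⟨by
      have : e = (d + e) - d := by abel
      rw [this]
      exact Submodule.sub_mem _ (Submodule.mem_sup_right hxD) (Submodule.mem_sup_left hd), he⟩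
    rw [hq'.inf_eq_bot] at this
    simp only [Submodule.mem_bot] at this
    subst this
    have : d + 0 ∈ P ⊓ D := ⟨by simpa using hd, by simpa using hxD⟩
    rw [h] at this
    simpa using this
  have hcD : IsCompl D (P ⊔ q') := ⟨hdD, by
    rw [codisjoint_iff, ← sup_assoc, sup_comm D P, hq'.sup_eq_top]⟩
  refine ⟨P.subtype ∘ₗ P.projectionOnto _ hcP, D.subtype ∘ₗ D.projectionOnto _ hcD,
    fun x => (P.projectionOnto _ hcP x).2, fun x => (D.projectionOnto _ hcD x).2,
    ?_, ?_, ?_⟩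
  · intro x hx
    obtain ⟨a, ha, b, hb, rfl⟩ := Submodule.mem_sup.1 hx
    simp only [LinearMap.comp_apply, Submodule.coe_subtype, map_add]
    rw [Submodule.linearProjOfIsCompl_apply_left hcP ⟨a, ha⟩,
      Submodule.linearProjOfIsCompl_apply_right' hcP (Submodule.mem_sup_left hb),
      Submodule.linearProjOfIsCompl_apply_right' hcD (Submodule.mem_sup_left ha),
      Submodule.linearProjOfIsCompl_apply_left hcD ⟨b, hb⟩]
    simp
  · intro x hx
    simp only [LinearMap.comp_apply, Submodule.coe_subtype]
    rw [Submodule.linearProjOfIsCompl_apply_left hcP ⟨x, hx⟩]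
  · intro x hx
    simp only [LinearMap.comp_apply, Submodule.coe_subtype]
    rw [Submodule.linearProjOfIsCompl_apply_right' hcD (Submodule.mem_sup_left hx)]
    simp

/-- lift along a basis, valid over noncommutative rings -/
noncomputable def basisLift {ι : Type*} [Fintype ι] (b : Basis ι K M) (w : ι → M') :
    M →ₗ[K] M' where
  toFun x := ∑ i, (b.repr x i) • w i
  map_add' x y := by
    simp only [map_add, Finsupp.add_apply, add_smul, Finset.sum_add_distrib]
  map_smul' c x := by
    simp only [map_smul, Finsupp.smul_apply, smul_eq_mul, RingHom.id_apply, Finset.smul_sum,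
      mul_smul]

lemma basisLift_basis {ι : Type*} [Fintype ι] [DecidableEq ι] (b : Basis ι K M) (w : ι → M')
    (i : ι) : basisLift b w (b i) = w i := by
  simp only [basisLift, LinearMap.coe_mk, AddHom.coe_mk, Basis.repr_self]
  rw [Finset.sum_eq_single i]
  · simp
  · intro j _ hj
    simp [Finsupp.single_apply, Ne.symm hj]
  · simp

lemma exists_map_cover (B : Submodule K M) (F : Submodule K M')
    [FiniteDimensional K M] [FiniteDimensional K M']
    (h : finrank K F ≤ finrank K B) : ∃ θ : M →ₗ[K] M', F ≤ map θ B := by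
  classical
  have bB := Module.finBasis K ↥B
  have bF := Module.finBasis K ↥F
  set u : ↥B →ₗ[K] ↥F := basisLift bB (fun i =>
    if hi : (i : ℕ) < finrank K ↥F then bF ⟨i, hi⟩ else 0) with hu
  have hsurj : Function.Surjective u := by
    have hr : LinearMap.range u = ⊤ := by
      rw [← top_le_iff, ← bF.span_eq]
      refine Submodule.span_le.2 ?_
      rintro x ⟨j, rfl⟩
      refine ⟨bB ⟨(j : ℕ), lt_of_lt_of_le j.2 h⟩, ?_⟩
      rw [hu, basisLift_basis]
      simp only [Fin.is_lt, dif_pos, Fin.eta]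
    intro y; rw [← LinearMap.mem_range, hr]; trivial
  obtain ⟨c, hc⟩ := Submodule.exists_isCompl B
  refine ⟨F.subtype ∘ₗ u ∘ₗ B.projectionOnto c hc, ?_⟩
  intro x hx
  obtain ⟨b, hb⟩ := hsurj ⟨x, hx⟩
  refine ⟨(b : M), b.2, ?_⟩
  simp only [LinearMap.comp_apply]
  rw [Submodule.linearProjOfIsCompl_apply_left hc b, hb]
  rfl

end Helpers

section Abstract

variable (K : Type*) [DivisionRing K]
variable (V1 V2 V3 : Type*) [AddCommGroup V1] [AddCommGroup V2] [AddCommGroup V3]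
  [Module K V1] [Module K V2] [Module K V3]

/-- projection onto first coordinate -/
noncomputable def pr1 : V1 × V2 × V3 →ₗ[K] V1 := LinearMap.fst K V1 (V2 × V3)
/-- projection onto coordinates 1,2 -/
noncomputable def pr12 : V1 × V2 × V3 →ₗ[K] V1 × V2 :=
  (LinearMap.fst K V1 (V2 × V3)).prod
    ((LinearMap.fst K V2 V3) ∘ₗ (LinearMap.snd K V1 (V2 × V3)))
/-- projection onto coordinates 1,3 -/
noncomputable def pr13 : V1 × V2 × V3 →ₗ[K] V1 × V3 :=
  (LinearMap.fst K V1 (V2 × V3)).prod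
    ((LinearMap.snd K V2 V3) ∘ₗ (LinearMap.snd K V1 (V2 × V3)))
/-- projection onto third coordinate -/
noncomputable def pr3 : V1 × V2 × V3 →ₗ[K] V3 :=
  (LinearMap.snd K V2 V3) ∘ₗ (LinearMap.snd K V1 (V2 × V3))

@[simp] lemma pr1_apply (x : V1 × V2 × V3) : pr1 K V1 V2 V3 x = x.1 := rfl
@[simp] lemma pr12_apply (x : V1 × V2 × V3) : pr12 K V1 V2 V3 x = (x.1, x.2.1) := rfl
@[simp] lemma pr13_apply (x : V1 × V2 × V3) : pr13 K V1 V2 V3 x = (x.1, x.2.2) := rfl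
@[simp] lemma pr3_apply (x : V1 × V2 × V3) : pr3 K V1 V2 V3 x = x.2.2 := rfl

variable [FiniteDimensional K V1] [FiniteDimensional K V2] [FiniteDimensional K V3]

variable {K V1 V2 V3}

lemma lower_bound (U W : Submodule K (V1 × V2 × V3)) (S : Submodule K (V1 × V3))
    (T : Submodule K (V1 × V2)) (hU : U ≤ W) (hS : S ≤ map (pr13 K V1 V2 V3) W)
    (hT : T ≤ map (pr12 K V1 V2 V3) W) :
    (finrank K ↥(map (pr1 K V1 V2 V3) U ⊔ map (LinearMap.fst K V1 V3) S
        ⊔ map (LinearMap.fst K V1 V2) T) : ℤ) + (finrank K U : ℤ)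
      + ((finrank K ↥(map (pr12 K V1 V2 V3) U ⊔ T) : ℤ)
        - (finrank K ↥(map (pr1 K V1 V2 V3) U ⊔ map (LinearMap.fst K V1 V2) T) : ℤ)
        - (finrank K ↥(map (pr12 K V1 V2 V3) U) : ℤ))
      ≤ (finrank K W : ℤ) := by
  set π1 := pr1 K V1 V2 V3
  set π12 := pr12 K V1 V2 V3
  set π13 := pr13 K V1 V2 V3
  set q1 := LinearMap.fst K V1 V2
  set r1 := LinearMap.fst K V1 V3
  have hq : q1 ∘ₗ π12 = π1 := LinearMap.ext fun x => rfl
  have hr : r1 ∘ₗ π13 = π1 := LinearMap.ext fun x => rfl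
  have e1 : finrank K ↥(map π12 W) + finrank K ↥(W ⊓ ker π12) = finrank K W :=
    fr_map_add _ _
  have e2 : finrank K ↥(map π1 W) + finrank K ↥(map π12 W ⊓ ker q1)
      = finrank K ↥(map π12 W) := by
    have := fr_map_add q1 (map π12 W)
    rwa [← Submodule.map_comp, hq] at this
  have h1 : map π1 U ⊔ map r1 S ⊔ map q1 T ≤ map π1 W := by
    refine sup_le (sup_le (Submodule.map_mono hU) ?_) ?_
    · refine le_trans (Submodule.map_mono hS) ?_
      rw [← Submodule.map_comp, hr]
    · refine le_trans (Submodule.map_mono hT) ?_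
      rw [← Submodule.map_comp, hq]
  have h1' := Submodule.finrank_mono h1
  have h2' : finrank K ↥((map π12 U ⊔ T) ⊓ ker q1) ≤ finrank K ↥(map π12 W ⊓ ker q1) :=
    Submodule.finrank_mono (inf_le_inf_right _ (sup_le (Submodule.map_mono hU) hT))
  have h3' : finrank K ↥(U ⊓ ker π12) ≤ finrank K ↥(W ⊓ ker π12) :=
    Submodule.finrank_mono (inf_le_inf_right _ hU)
  have I1 : finrank K ↥(map π1 U ⊔ map q1 T) + finrank K ↥((map π12 U ⊔ T) ⊓ ker q1)
      = finrank K ↥(map π12 U ⊔ T) := by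
    have := fr_map_add q1 (map π12 U ⊔ T)
    rwa [Submodule.map_sup, ← Submodule.map_comp, hq] at this
  have I2 : finrank K ↥(map π12 U) + finrank K ↥(U ⊓ ker π12) = finrank K U :=
    fr_map_add _ _
  omega


lemma upper_bound (U : Submodule K (V1 × V2 × V3)) (S : Submodule K (V1 × V3))
    (T : Submodule K (V1 × V2))
    (hm : (finrank K ↥(map (pr13 K V1 V2 V3) U ⊔ S) : ℤ)
        - (finrank K ↥(map (pr1 K V1 V2 V3) U ⊔ map (LinearMap.fst K V1 V3) S) : ℤ)
        - (finrank K ↥(map (pr13 K V1 V2 V3) U) : ℤ)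
      ≤ (finrank K ↥(map (pr12 K V1 V2 V3) U ⊔ T) : ℤ)
        - (finrank K ↥(map (pr1 K V1 V2 V3) U ⊔ map (LinearMap.fst K V1 V2) T) : ℤ)
        - (finrank K ↥(map (pr12 K V1 V2 V3) U) : ℤ)) :
    ∃ W : Submodule K (V1 × V2 × V3), U ≤ W ∧ S ≤ map (pr13 K V1 V2 V3) W ∧
      T ≤ map (pr12 K V1 V2 V3) W ∧
      (finrank K W : ℤ) ≤ (finrank K ↥(map (pr1 K V1 V2 V3) U ⊔ map (LinearMap.fst K V1 V3) S
          ⊔ map (LinearMap.fst K V1 V2) T) : ℤ) + (finrank K U : ℤ)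
        + ((finrank K ↥(map (pr12 K V1 V2 V3) U ⊔ T) : ℤ)
          - (finrank K ↥(map (pr1 K V1 V2 V3) U ⊔ map (LinearMap.fst K V1 V2) T) : ℤ)
          - (finrank K ↥(map (pr12 K V1 V2 V3) U) : ℤ)) := by
  classical
  set π1 := pr1 K V1 V2 V3 with hπ1def
  set π12 := pr12 K V1 V2 V3 with hπ12def
  set π13 := pr13 K V1 V2 V3 with hπ13def
  set π3 := pr3 K V1 V2 V3 with hπ3def
  set q1 := LinearMap.fst K V1 V2 with hq1def
  set r1 := LinearMap.fst K V1 V3 with hr1def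
  set s3 := LinearMap.snd K V1 V3 with hs3def
  have hq : q1 ∘ₗ π12 = π1 := LinearMap.ext fun x => rfl
  have hr : r1 ∘ₗ π13 = π1 := LinearMap.ext fun x => rfl
  -- basic submodules
  set P1 := map π1 U with hP1def
  set Ta := map π12 U ⊓ T with hTadef
  set Tpi := T ⊓ comap q1 P1 with hTpidef
  have hTaTpi : Ta ≤ Tpi := by
    intro t ht
    refine ⟨ht.2, ?_⟩
    have : q1 t ∈ map q1 (map π12 U) := mem_map_of_mem ht.1
    rwa [← Submodule.map_comp, hq] at this
  obtain ⟨B, hBle, hBinf, hBsup, hBdim⟩ := exists_compl_le hTaTpi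
  obtain ⟨C', hC'le, hC'inf, hC'sup, hC'dim⟩ :=
    exists_compl_le (inf_le_left : Tpi ≤ T)
  rw [← hTpidef] at hC'inf hC'sup hC'dim
  set D := map q1 C' with hDdef
  have hPD : P1 ⊓ D = ⊥ := by
    rw [eq_bot_iff]
    rintro x ⟨hxP, hxD⟩
    obtain ⟨t, htC, rfl⟩ := hxD
    have htTpi : t ∈ Tpi := ⟨hC'le htC, hxP⟩
    have : t ∈ Tpi ⊓ C' := ⟨htTpi, htC⟩
    rw [hC'inf] at this
    simp only [Submodule.mem_bot] at this
    subst this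
    simp
  obtain ⟨πP, πD, hπPmem, hπDmem, hπsum, hπPid, hπDzero⟩ := exists_proj_pair P1 D hPD
  obtain ⟨η, hη⟩ := exists_global_section π1 U
  obtain ⟨cm, hcm⟩ := exists_global_section q1 C'
  set Z := P1 ⊔ map q1 T with hZdef
  have hZPD : Z ≤ P1 ⊔ D := by
    refine sup_le le_sup_left ?_
    rw [← hC'sup, Submodule.map_sup]
    refine sup_le ?_ le_sup_right
    refine le_trans ?_ le_sup_left
    rw [Submodule.map_le_iff_le_comap]
    exact inf_le_right
  set KS := S ⊓ comap r1 Z with hKSdef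
  set K' := S ⊓ comap r1 P1 with hK'def
  have hK'KS : K' ≤ KS := inf_le_inf_left _ (comap_mono le_sup_left)
  obtain ⟨K'', hK''le, hK''inf, hK''sup, hK''dim⟩ := exists_compl_le hK'KS
  set cK : (V1 × V3) →ₗ[K] V1 × V2 := cm ∘ₗ πD ∘ₗ r1 with hcKdef
  set τ : (V1 × V3) →ₗ[K] V3 := s3 - (π3 ∘ₗ η ∘ₗ πP ∘ₗ r1) with hτdef
  have hcK0 : ∀ s ∈ K'', cK s = 0 → s = 0 := by
    intro s hs h0
    have hsKS : s ∈ KS := hK''le hs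
    have hzPD : r1 s ∈ P1 ⊔ D := hZPD hsKS.2
    have hq1 : q1 (cK s) = πD (r1 s) := (hcm _ (hπDmem (r1 s))).2
    rw [h0, map_zero] at hq1
    have hsum := hπsum _ hzPD
    rw [← hq1, add_zero] at hsum
    have hP : r1 s ∈ P1 := by rw [← hsum]; exact hπPmem _
    have : s ∈ K' ⊓ K'' := ⟨⟨hsKS.1, hP⟩, hs⟩
    rw [hK''inf] at this
    simpa using this
  obtain ⟨γ, hγ⟩ := exists_global_section cK K''
  set ψC : (V1 × V2) →ₗ[K] V3 := τ ∘ₗ γ with hψCdef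
  have hψCfact : ∀ s ∈ K'', ψC (cK s) = τ s := by
    intro s hs
    obtain ⟨h1, h2⟩ := hγ _ (mem_map_of_mem hs)
    have hdiff : γ (cK s) - s ∈ K'' := sub_mem h1 hs
    have h3 : cK (γ (cK s) - s) = 0 := by rw [map_sub, h2, sub_self]
    have h4 := hcK0 _ hdiff h3
    have hγs : γ (cK s) = s := by rwa [sub_eq_zero] at h4
    show τ (γ (cK s)) = τ s
    rw [hγs]
  -- the covering space in V3
  set N := map s3 ((map π13 U ⊔ S) ⊓ ker r1) with hNdef
  set J := map s3 (map π13 U ⊓ ker r1) with hJdef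
  have hJN : J ≤ N := Submodule.map_mono (inf_le_inf_right _ le_sup_left)
  obtain ⟨F, hFle, hFinf, hFsup, hFdim⟩ := exists_compl_le hJN
  -- dimension bookkeeping for F and B
  have hkerbot : ∀ X : Submodule K (V1 × V3), X ≤ ker r1 → X ⊓ ker s3 = ⊥ := by
    intro X hX
    rw [eq_bot_iff]
    rintro x ⟨hx1, hx2⟩
    have h1 : x.1 = 0 := hX hx1
    have h2 : x.2 = 0 := hx2
    simp only [Submodule.mem_bot]
    exact Prod.ext h1 h2
  have hNdim : finrank K N = finrank K ↥((map π13 U ⊔ S) ⊓ ker r1) := by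
    have := fr_map_add s3 ((map π13 U ⊔ S) ⊓ ker r1)
    rwa [hkerbot _ inf_le_right, finrank_bot, add_zero] at this
  have hJdim : finrank K J = finrank K ↥(map π13 U ⊓ ker r1) := by
    have := fr_map_add s3 (map π13 U ⊓ ker r1)
    rwa [hkerbot _ inf_le_right, finrank_bot, add_zero] at this
  have I3 : finrank K ↥(P1 ⊔ map r1 S) + finrank K ↥((map π13 U ⊔ S) ⊓ ker r1)
      = finrank K ↥(map π13 U ⊔ S) := by
    have h := fr_map_add r1 (map π13 U ⊔ S)
    rwa [Submodule.map_sup, ← Submodule.map_comp, hr, ← hP1def] at h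
  have I4 : finrank K P1 + finrank K ↥(map π13 U ⊓ ker r1) = finrank K ↥(map π13 U) := by
    have h := fr_map_add r1 (map π13 U)
    rwa [← Submodule.map_comp, hr, ← hP1def] at h
  have I5 : finrank K Z + finrank K ↥((map π12 U ⊔ T) ⊓ ker q1)
      = finrank K ↥(map π12 U ⊔ T) := by
    have h := fr_map_add q1 (map π12 U ⊔ T)
    rwa [Submodule.map_sup, ← Submodule.map_comp, hq, ← hP1def, ← hZdef] at h
  have I6 : finrank K P1 + finrank K ↥(map π12 U ⊓ ker q1) = finrank K ↥(map π12 U) := by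
    have h := fr_map_add q1 (map π12 U)
    rwa [← Submodule.map_comp, hq, ← hP1def] at h
  have I2 : finrank K ↥(map π12 U) + finrank K ↥(U ⊓ ker π12) = finrank K U :=
    fr_map_add _ _
  have hC1le : (map π12 U ⊔ T) ⊓ ker q1 ≤ map π12 U ⊔ Tpi := by
    rintro x ⟨hx1, hx2⟩
    obtain ⟨u, hu, t, ht, rfl⟩ := mem_sup.1 hx1
    have hq1u : q1 u ∈ P1 := by
      have : q1 u ∈ map q1 (map π12 U) := mem_map_of_mem hu
      rwa [← Submodule.map_comp, hq] at this
    have hq1t : q1 t ∈ P1 := by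
      have h0 : q1 (u + t) = 0 := hx2
      rw [map_add] at h0
      have hneg : q1 t = -q1 u := by
        rw [eq_neg_iff_add_eq_zero, add_comm]; exact h0
      rw [hneg]; exact neg_mem hq1u
    exact mem_sup.2 ⟨u, hu, t, ⟨ht, hq1t⟩, rfl⟩
  have hC1infU : ((map π12 U ⊔ T) ⊓ ker q1) ⊓ map π12 U = map π12 U ⊓ ker q1 := by
    apply le_antisymm
    · rintro x ⟨⟨_, hk⟩, hu⟩; exact ⟨hu, hk⟩
    · rintro x ⟨hu, hk⟩; exact ⟨⟨Submodule.mem_sup_left hu, hk⟩, hu⟩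
  have hTpiU : map π12 U ⊓ Tpi = Ta := by
    apply le_antisymm
    · rintro x ⟨hu, ht, _⟩; exact ⟨hu, ht⟩
    · rintro x ⟨hu, ht⟩; exact ⟨hu, hTaTpi ⟨hu, ht⟩⟩
  have hM2 := Submodule.finrank_sup_add_finrank_inf_eq ((map π12 U ⊔ T) ⊓ ker q1) (map π12 U)
  rw [hC1infU] at hM2
  have hM4 : finrank K ↥(((map π12 U ⊔ T) ⊓ ker q1) ⊔ map π12 U)
      ≤ finrank K ↥(map π12 U ⊔ Tpi) :=
    Submodule.finrank_mono (sup_le hC1le le_sup_left)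
  have hM5 := Submodule.finrank_sup_add_finrank_inf_eq (map π12 U) Tpi
  rw [hTpiU] at hM5
  have hFB : finrank K F ≤ finrank K B := by omega
  obtain ⟨θ0, hθ0⟩ := exists_map_cover B F hFB
  -- the lifting maps
  set gB : (V1 × V2) →ₗ[K] V3 := π3 ∘ₗ η ∘ₗ q1 with hgBdef
  set ΛB : (V1 × V2) →ₗ[K] V1 × V2 × V3 :=
    (LinearMap.fst K V1 V2).prod ((LinearMap.snd K V1 V2).prod (gB + θ0)) with hΛBdef
  set ΛC : (V1 × V2) →ₗ[K] V1 × V2 × V3 :=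
    (LinearMap.fst K V1 V2).prod ((LinearMap.snd K V1 V2).prod ψC) with hΛCdef
  set W0 := U ⊔ map ΛB B ⊔ map ΛC C' with hW0def
  have hUW0 : U ≤ W0 := le_trans le_sup_left le_sup_left
  have hBW0 : map ΛB B ≤ W0 := le_trans le_sup_right le_sup_left
  have hCW0 : map ΛC C' ≤ W0 := le_sup_right
  have hTW0 : T ≤ map π12 W0 := by
    rw [← hC'sup, ← hBsup]
    refine sup_le (sup_le ?_ ?_) ?_
    · exact le_trans inf_le_left (le_trans (Submodule.map_mono hUW0) le_rfl)
    · intro b hb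
      exact Submodule.map_mono hBW0 ⟨ΛB b, mem_map_of_mem hb, rfl⟩
    · intro c hc
      exact Submodule.map_mono hCW0 ⟨ΛC c, mem_map_of_mem hc, rfl⟩
  -- the key covering property
  have hKEY : KS ≤ map π13 W0 := by
    intro s hs
    rw [← hK''sup] at hs
    obtain ⟨s', hs', s'', hs'', rfl⟩ := mem_sup.1 hs
    refine add_mem ?_ ?_
    · -- s' ∈ K'
      have hs'S : s' ∈ S := hs'.1
      have hr1P : s'.1 ∈ P1 := hs'.2
      obtain ⟨hu1U, hu1p⟩ := hη _ hr1P
      have hu1p' : (η s'.1).1 = s'.1 := hu1p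
      have hdN : (s'.2 - (η s'.1).2.2) ∈ N := by
        refine ⟨s' - π13 (η s'.1), ⟨?_, ?_⟩, ?_⟩
        · exact sub_mem (Submodule.mem_sup_right hs'S)
            (Submodule.mem_sup_left (mem_map_of_mem hu1U))
        · show r1 (s' - π13 (η s'.1)) = 0
          have : r1 (s' - π13 (η s'.1)) = s'.1 - (η s'.1).1 := rfl
          rw [this, hu1p', sub_self]
        · show (s' - π13 (η s'.1)).2 = _
          have : (s' - π13 (η s'.1)).2 = s'.2 - (η s'.1).2.2 := rfl
          rw [this]
      rw [← hFsup] at hdN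
      obtain ⟨j, hj, f, hf, hjf⟩ := mem_sup.1 hdN
      obtain ⟨y2, hy2, hy2j⟩ := hj
      obtain ⟨u2, hu2U, hu2⟩ := hy2.1
      have hy2r : y2.1 = 0 := hy2.2
      have hy2j' : y2.2 = j := hy2j
      obtain ⟨b, hbB, hbf⟩ := hθ0 hf
      have hbP : b.1 ∈ P1 := (hBle hbB).2
      obtain ⟨hu3U, hu3p⟩ := hη _ hbP
      have hu3p' : (η b.1).1 = b.1 := hu3p
      refine ⟨η s'.1 + u2 + (ΛB b - η b.1),
        add_mem (add_mem (hUW0 hu1U) (hUW0 hu2U))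
          (sub_mem (hBW0 (mem_map_of_mem hbB)) (hUW0 hu3U)), ?_⟩
      have hcomp : π13 (η s'.1 + u2 + (ΛB b - η b.1))
          = (s'.1 + y2.1 + (b.1 - b.1),
             (η s'.1).2.2 + y2.2 + ((η b.1).2.2 + θ0 b - (η b.1).2.2)) := by
        have e1 : π13 (η s'.1 + u2 + (ΛB b - η b.1))
            = ((η s'.1).1 + (π13 u2).1 + ((ΛB b).1 - (η b.1).1),
               (η s'.1).2.2 + (π13 u2).2 + ((ΛB b).2.2 - (η b.1).2.2)) := rfl
        rw [e1, hu2, hu1p', hu3p']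
        have e2 : (ΛB b).1 = b.1 := rfl
        have e3 : (ΛB b).2.2 = (η b.1).2.2 + θ0 b := rfl
        rw [e2, e3]
      rw [hcomp, hy2r, hy2j', hbf]
      have : s'.1 + 0 + (b.1 - b.1) = s'.1 := by abel
      rw [this]
      have : (η s'.1).2.2 + j + ((η b.1).2.2 + f - (η b.1).2.2) = (η s'.1).2.2 + (j + f) := by
        abel
      rw [this, hjf]
      have : (η s'.1).2.2 + (s'.2 - (η s'.1).2.2) = s'.2 := by abel
      rw [this]
    · -- s'' ∈ K''
      have hs''KS : s'' ∈ KS := hK''le hs''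
      have hzPD : s''.1 ∈ P1 ⊔ D := hZPD hs''KS.2
      obtain ⟨hcmC, hcmq⟩ := hcm _ (hπDmem s''.1)
      obtain ⟨hu4U, hu4p⟩ := hη _ (hπPmem s''.1)
      have hu4p' : (η (πP s''.1)).1 = πP s''.1 := hu4p
      have hψ := hψCfact s'' hs''
      refine ⟨η (πP s''.1) + ΛC (cK s''),
        add_mem (hUW0 hu4U) (hCW0 (mem_map_of_mem hcmC)), ?_⟩
      have hcomp : π13 (η (πP s''.1) + ΛC (cK s''))
          = ((η (πP s''.1)).1 + (cK s'').1, (η (πP s''.1)).2.2 + ψC (cK s'')) := rfl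
      rw [hcomp, hu4p', hψ]
      have hck1 : (cK s'').1 = πD s''.1 := hcmq
      rw [hck1]
      have hτ : τ s'' = s''.2 - (η (πP s''.1)).2.2 := rfl
      rw [hτ]
      have h1 : πP s''.1 + πD s''.1 = s''.1 := hπsum _ hzPD
      have h2 : (η (πP s''.1)).2.2 + (s''.2 - (η (πP s''.1)).2.2) = s''.2 := by abel
      rw [h1, h2]
  -- the final subspace
  obtain ⟨Sc, hScle, hScinf, hScsup, hScdim⟩ :=
    exists_compl_le (inf_le_left : S ⊓ map π13 W0 ≤ S)
  set emb13 : (V1 × V3) →ₗ[K] V1 × V2 × V3 :=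
    (LinearMap.fst K V1 V3).prod
      (((0 : (V1 × V3) →ₗ[K] V2)).prod (LinearMap.snd K V1 V3)) with hembdef
  set W := W0 ⊔ map emb13 Sc with hWdef
  refine ⟨W, le_trans hUW0 le_sup_left, ?_, le_trans hTW0 (Submodule.map_mono le_sup_left), ?_⟩
  · rw [← hScsup]
    refine sup_le (le_trans inf_le_right (Submodule.map_mono le_sup_left)) ?_
    intro x hx
    exact ⟨emb13 x, Submodule.mem_sup_right (mem_map_of_mem hx), rfl⟩
  · -- dimension count
    have hWle : finrank K W ≤ finrank K W0 + finrank K Sc := by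
      have h1 := fr_sup_le W0 (map emb13 Sc)
      rw [← hWdef] at h1
      have h2 := Submodule.finrank_map_le emb13 Sc
      omega
    have hW0le : finrank K W0 ≤ finrank K U + finrank K B + finrank K C' := by
      have h1 := fr_sup_le (U ⊔ map ΛB B) (map ΛC C')
      rw [← hW0def] at h1
      have h2 := fr_sup_le U (map ΛB B)
      have h3 := Submodule.finrank_map_le ΛB B
      have h4 := Submodule.finrank_map_le ΛC C'
      omega
    have hKSle : finrank K KS ≤ finrank K ↥(S ⊓ map π13 W0) :=
      Submodule.finrank_mono (le_inf inf_le_left hKEY)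
    have hKSdim : finrank K ↥(map (Z.mkQ ∘ₗ r1) S) + finrank K KS = finrank K S := by
      have h := fr_map_add (Z.mkQ ∘ₗ r1) S
      have hker : ker (Z.mkQ ∘ₗ r1) = comap r1 Z := by
        ext x
        simp only [LinearMap.mem_ker, LinearMap.comp_apply, Submodule.mem_comap]
        exact Submodule.Quotient.mk_eq_zero Z
      rwa [hker] at h
    have hmq : finrank K ↥(map (Z.mkQ ∘ₗ r1) S) ≤ finrank K ↥(map Z.mkQ (Z ⊔ map r1 S)) := by
      rw [Submodule.map_comp]
      exact Submodule.finrank_mono (Submodule.map_mono le_sup_right)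
    have hmq2 : finrank K ↥(map Z.mkQ (Z ⊔ map r1 S)) + finrank K Z
        = finrank K ↥(Z ⊔ map r1 S) := by
      have h := fr_map_add Z.mkQ (Z ⊔ map r1 S)
      rwa [Submodule.ker_mkQ, inf_eq_right.2 le_sup_left] at h
    have hZsup : finrank K ↥(Z ⊔ map r1 S) = finrank K ↥(P1 ⊔ map r1 S ⊔ map q1 T) := by
      rw [show Z ⊔ map r1 S = P1 ⊔ map r1 S ⊔ map q1 T from sup_right_comm _ _ _]
    rw [hZsup] at hmq2
    have hTmod := Submodule.finrank_sup_add_finrank_inf_eq (map π12 U) T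
    rw [← hTadef] at hTmod
    omega

theorem abstract_minrank (U : Submodule K (V1 × V2 × V3)) (S : Submodule K (V1 × V3))
    (T : Submodule K (V1 × V2)) :
    (∃ W : Submodule K (V1 × V2 × V3), U ≤ W ∧ S ≤ map (pr13 K V1 V2 V3) W ∧
      T ≤ map (pr12 K V1 V2 V3) W ∧
      (finrank K W : ℤ) ≤ (finrank K ↥(map (pr1 K V1 V2 V3) U ⊔ map (LinearMap.fst K V1 V3) S
          ⊔ map (LinearMap.fst K V1 V2) T) : ℤ) + (finrank K U : ℤ)
        + max ((finrank K ↥(map (pr12 K V1 V2 V3) U ⊔ T) : ℤ)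
            - (finrank K ↥(map (pr1 K V1 V2 V3) U ⊔ map (LinearMap.fst K V1 V2) T) : ℤ)
            - (finrank K ↥(map (pr12 K V1 V2 V3) U) : ℤ))
          ((finrank K ↥(map (pr13 K V1 V2 V3) U ⊔ S) : ℤ)
            - (finrank K ↥(map (pr1 K V1 V2 V3) U ⊔ map (LinearMap.fst K V1 V3) S) : ℤ)
            - (finrank K ↥(map (pr13 K V1 V2 V3) U) : ℤ))) ∧
    (∀ W : Submodule K (V1 × V2 × V3), U ≤ W → S ≤ map (pr13 K V1 V2 V3) W →
      T ≤ map (pr12 K V1 V2 V3) W →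
      (finrank K ↥(map (pr1 K V1 V2 V3) U ⊔ map (LinearMap.fst K V1 V3) S
          ⊔ map (LinearMap.fst K V1 V2) T) : ℤ) + (finrank K U : ℤ)
        + max ((finrank K ↥(map (pr12 K V1 V2 V3) U ⊔ T) : ℤ)
            - (finrank K ↥(map (pr1 K V1 V2 V3) U ⊔ map (LinearMap.fst K V1 V2) T) : ℤ)
            - (finrank K ↥(map (pr12 K V1 V2 V3) U) : ℤ))
          ((finrank K ↥(map (pr13 K V1 V2 V3) U ⊔ S) : ℤ)
            - (finrank K ↥(map (pr1 K V1 V2 V3) U ⊔ map (LinearMap.fst K V1 V3) S) : ℤ)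
            - (finrank K ↥(map (pr13 K V1 V2 V3) U) : ℤ))
        ≤ (finrank K W : ℤ)) := by
  set e : (V1 × V2 × V3) ≃ₗ[K] V1 × V3 × V2 :=
    LinearEquiv.prodCongr (LinearEquiv.refl K V1) (LinearEquiv.prodComm K V2 V3) with hedef
  have he1 : ∀ X : Submodule K (V1 × V2 × V3),
      map (pr1 K V1 V3 V2) (map (e : (V1 × V2 × V3) →ₗ[K] V1 × V3 × V2) X)
        = map (pr1 K V1 V2 V3) X := by
    intro X
    rw [← Submodule.map_comp]
    rfl
  have he12 : ∀ X : Submodule K (V1 × V2 × V3),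
      map (pr12 K V1 V3 V2) (map (e : (V1 × V2 × V3) →ₗ[K] V1 × V3 × V2) X)
        = map (pr13 K V1 V2 V3) X := by
    intro X; rw [← Submodule.map_comp]; rfl
  have he13 : ∀ X : Submodule K (V1 × V2 × V3),
      map (pr13 K V1 V3 V2) (map (e : (V1 × V2 × V3) →ₗ[K] V1 × V3 × V2) X)
        = map (pr12 K V1 V2 V3) X := by
    intro X; rw [← Submodule.map_comp]; rfl
  have hs12 : ∀ X : Submodule K (V1 × V3 × V2),
      map (pr12 K V1 V2 V3) (map (e.symm : (V1 × V3 × V2) →ₗ[K] V1 × V2 × V3) X)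
        = map (pr13 K V1 V3 V2) X := by
    intro X; rw [← Submodule.map_comp]; rfl
  have hs13 : ∀ X : Submodule K (V1 × V3 × V2),
      map (pr13 K V1 V2 V3) (map (e.symm : (V1 × V3 × V2) →ₗ[K] V1 × V2 × V3) X)
        = map (pr12 K V1 V3 V2) X := by
    intro X; rw [← Submodule.map_comp]; rfl
  have hre : ∀ X : Submodule K (V1 × V2 × V3),
      finrank K ↥(map (e : (V1 × V2 × V3) →ₗ[K] V1 × V3 × V2) X) = finrank K X :=
    fun X => LinearEquiv.finrank_map_eq e X
  constructor
  · -- existence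
    rcases le_total
      ((finrank K ↥(map (pr13 K V1 V2 V3) U ⊔ S) : ℤ)
        - (finrank K ↥(map (pr1 K V1 V2 V3) U ⊔ map (LinearMap.fst K V1 V3) S) : ℤ)
        - (finrank K ↥(map (pr13 K V1 V2 V3) U) : ℤ))
      ((finrank K ↥(map (pr12 K V1 V2 V3) U ⊔ T) : ℤ)
        - (finrank K ↥(map (pr1 K V1 V2 V3) U ⊔ map (LinearMap.fst K V1 V2) T) : ℤ)
        - (finrank K ↥(map (pr12 K V1 V2 V3) U) : ℤ)) with hcase | hcase
    · obtain ⟨W, h1, h2, h3, h4⟩ := upper_bound U S T hcase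
      exact ⟨W, h1, h2, h3, le_trans h4 (by
        have := le_max_left
          ((finrank K ↥(map (pr12 K V1 V2 V3) U ⊔ T) : ℤ)
            - (finrank K ↥(map (pr1 K V1 V2 V3) U ⊔ map (LinearMap.fst K V1 V2) T) : ℤ)
            - (finrank K ↥(map (pr12 K V1 V2 V3) U) : ℤ))
          ((finrank K ↥(map (pr13 K V1 V2 V3) U ⊔ S) : ℤ)
            - (finrank K ↥(map (pr1 K V1 V2 V3) U ⊔ map (LinearMap.fst K V1 V3) S) : ℤ)
            - (finrank K ↥(map (pr13 K V1 V2 V3) U) : ℤ))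
        omega)⟩
    · -- swapped case
      obtain ⟨W', h1, h2, h3, h4⟩ := upper_bound (map (e : (V1 × V2 × V3) →ₗ[K] V1 × V3 × V2) U)
        T S (by rw [he12, he13, he1]; exact hcase)
      refine ⟨map (e.symm : (V1 × V3 × V2) →ₗ[K] V1 × V2 × V3) W', ?_, ?_, ?_, ?_⟩
      · intro x hx
        exact ⟨e x, h1 (mem_map_of_mem hx), e.symm_apply_apply x⟩
      · rw [hs13]; exact h3
      · rw [hs12]; exact h2
      · rw [he12, he1, hre] at h4
        have hfr : finrank K ↥(map (e.symm : (V1 × V3 × V2) →ₗ[K] V1 × V2 × V3) W')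
            = finrank K W' := LinearEquiv.finrank_map_eq e.symm W'
        rw [hfr]
        have hsup : map (pr1 K V1 V2 V3) U ⊔ map (LinearMap.fst K V1 V3) S
              ⊔ map (LinearMap.fst K V1 V2) T
            = map (pr1 K V1 V2 V3) U ⊔ map (LinearMap.fst K V1 V2) T
              ⊔ map (LinearMap.fst K V1 V3) S := sup_right_comm _ _ _
        rw [hsup]
        refine le_trans h4 ?_
        have := le_max_right
          ((finrank K ↥(map (pr12 K V1 V2 V3) U ⊔ T) : ℤ)
            - (finrank K ↥(map (pr1 K V1 V2 V3) U ⊔ map (LinearMap.fst K V1 V2) T) : ℤ)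
            - (finrank K ↥(map (pr12 K V1 V2 V3) U) : ℤ))
          ((finrank K ↥(map (pr13 K V1 V2 V3) U ⊔ S) : ℤ)
            - (finrank K ↥(map (pr1 K V1 V2 V3) U ⊔ map (LinearMap.fst K V1 V3) S) : ℤ)
            - (finrank K ↥(map (pr13 K V1 V2 V3) U) : ℤ))
        omega
  · -- lower bound
    intro W hU hS hT
    have hb1 := lower_bound U W S T hU hS hT
    have hb2 := lower_bound (map (e : (V1 × V2 × V3) →ₗ[K] V1 × V3 × V2) U)
      (map (e : (V1 × V2 × V3) →ₗ[K] V1 × V3 × V2) W) T S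
      (Submodule.map_mono hU)
      (by rw [he13]; exact hT) (by rw [he12]; exact hS)
    rw [he1, he12, hre, hre] at hb2
    have hsup : map (pr1 K V1 V2 V3) U ⊔ map (LinearMap.fst K V1 V2) T
          ⊔ map (LinearMap.fst K V1 V3) S
        = map (pr1 K V1 V2 V3) U ⊔ map (LinearMap.fst K V1 V3) S
          ⊔ map (LinearMap.fst K V1 V2) T := sup_right_comm _ _ _
    rw [hsup] at hb2
    have hmax := max_le_iff (a := (finrank K ↥(map (pr12 K V1 V2 V3) U ⊔ T) : ℤ)
        - (finrank K ↥(map (pr1 K V1 V2 V3) U ⊔ map (LinearMap.fst K V1 V2) T) : ℤ)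
        - (finrank K ↥(map (pr12 K V1 V2 V3) U) : ℤ))
      (b := (finrank K ↥(map (pr13 K V1 V2 V3) U ⊔ S) : ℤ)
        - (finrank K ↥(map (pr1 K V1 V2 V3) U ⊔ map (LinearMap.fst K V1 V3) S) : ℤ)
        - (finrank K ↥(map (pr13 K V1 V2 V3) U) : ℤ))
      (c := (finrank K W : ℤ) - (finrank K ↥(map (pr1 K V1 V2 V3) U
          ⊔ map (LinearMap.fst K V1 V3) S ⊔ map (LinearMap.fst K V1 V2) T) : ℤ)
        - (finrank K U : ℤ))
    omega

end Abstract

open Matrix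

abbrev H : Type := Quaternion ℝ

noncomputable def rk {α β : Type} [Fintype α] [Fintype β] (M : Matrix α β H) : ℕ :=
  Module.finrank Hᵐᵒᵖ (Submodule.span Hᵐᵒᵖ (Set.range fun j : β => fun i : α => M i j))

noncomputable instance : Module.Finite Hᵐᵒᵖ H := by
  refine Module.Finite.of_surjective (LinearMap.toSpanSingleton Hᵐᵒᵖ H 1) ?_
  intro x
  exact ⟨MulOpposite.op x, by simp [LinearMap.toSpanSingleton_apply]⟩

section Bridge

lemma map_span_range {M M' : Type*} [AddCommGroup M] [AddCommGroup M']
    [Module Hᵐᵒᵖ M] [Module Hᵐᵒᵖ M'] {γ : Type} (g : M →ₗ[Hᵐᵒᵖ] M') (f : γ → M) :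
    Submodule.map g (Submodule.span Hᵐᵒᵖ (Set.range f))
      = Submodule.span Hᵐᵒᵖ (Set.range fun j => g (f j)) := by
  rw [Submodule.map_span, ← Set.range_comp]
  rfl

lemma finrank_span_equiv {M M' : Type*} [AddCommGroup M] [AddCommGroup M']
    [Module Hᵐᵒᵖ M] [Module Hᵐᵒᵖ M'] (e : M ≃ₗ[Hᵐᵒᵖ] M') {γ : Type} (f : γ → M) :
    finrank Hᵐᵒᵖ (Submodule.span Hᵐᵒᵖ (Set.range fun j => e (f j)))
      = finrank Hᵐᵒᵖ (Submodule.span Hᵐᵒᵖ (Set.range f)) := by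
  have h : Submodule.map (e : M →ₗ[Hᵐᵒᵖ] M') (Submodule.span Hᵐᵒᵖ (Set.range f))
      = Submodule.span Hᵐᵒᵖ (Set.range fun j => e (f j)) := map_span_range _ f
  rw [← h]
  exact LinearEquiv.finrank_map_eq e _

lemma span_range_sum {M : Type*} [AddCommGroup M] [Module Hᵐᵒᵖ M] {γ1 γ2 : Type}
    (f : γ1 → M) (g : γ2 → M) :
    Submodule.span Hᵐᵒᵖ (Set.range (Sum.elim f g))
      = Submodule.span Hᵐᵒᵖ (Set.range f) ⊔ Submodule.span Hᵐᵒᵖ (Set.range g) := by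
  rw [Set.Sum.elim_range, Submodule.span_union]

noncomputable def esum (α β : Type) : (α ⊕ β → H) ≃ₗ[Hᵐᵒᵖ] (α → H) × (β → H) :=
  LinearEquiv.sumArrowLequivProdArrow α β Hᵐᵒᵖ H

noncomputable def etriple (α β γ : Type) :
    ((α ⊕ β) ⊕ γ → H) ≃ₗ[Hᵐᵒᵖ] (α → H) × (β → H) × (γ → H) :=
  (esum (α ⊕ β) γ).trans (((esum α β).prodCongr (LinearEquiv.refl Hᵐᵒᵖ (γ → H))).trans
    (LinearEquiv.prodAssoc Hᵐᵒᵖ (α → H) (β → H) (γ → H)))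

lemma rk_def {α β : Type} [Fintype α] [Fintype β] (M : Matrix α β H) :
    rk M = finrank Hᵐᵒᵖ (Submodule.span Hᵐᵒᵖ (Set.range fun j : β => fun i : α => M i j)) :=
  rfl

end Bridge

set_option maxHeartbeats 2000000 in
theorem stmt_3 {n' m' p' n m p : ℕ}
    (A1 : Matrix (Fin n') (Fin n) H) (B1 : Matrix (Fin n') (Fin m) H)
    (C1 : Matrix (Fin n') (Fin p) H) (D1 : Matrix (Fin m') (Fin n) H)
    (E1 : Matrix (Fin m') (Fin p) H) (F1 : Matrix (Fin p') (Fin n) H)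
    (G1 : Matrix (Fin p') (Fin m) H) :
    (∃ (X : Matrix (Fin m') (Fin m) H) (Y : Matrix (Fin p') (Fin p) H), (rk (Matrix.fromRows (Matrix.fromRows (Matrix.fromCols (Matrix.fromCols A1 B1) C1) (Matrix.fromCols (Matrix.fromCols D1 X) E1)) (Matrix.fromCols (Matrix.fromCols F1 G1) Y)) : ℤ) = (((rk (Matrix.fromCols (Matrix.fromCols A1 B1) C1) : ℤ)) + ((rk (Matrix.fromRows (Matrix.fromRows A1 D1) F1) : ℤ)) + max (((rk (Matrix.fromRows (Matrix.fromCols A1 C1) (Matrix.fromCols D1 E1)) : ℤ)) - ((rk (Matrix.fromCols A1 C1) : ℤ)) - ((rk (Matrix.fromRows A1 D1) : ℤ))) (((rk (Matrix.fromRows (Matrix.fromCols A1 B1) (Matrix.fromCols F1 G1)) : ℤ)) - ((rk (Matrix.fromCols A1 B1) : ℤ)) - ((rk (Matrix.fromRows A1 F1) : ℤ))))) ∧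
    (∀ (X : Matrix (Fin m') (Fin m) H) (Y : Matrix (Fin p') (Fin p) H), (((rk (Matrix.fromCols (Matrix.fromCols A1 B1) C1) : ℤ)) + ((rk (Matrix.fromRows (Matrix.fromRows A1 D1) F1) : ℤ)) + max (((rk (Matrix.fromRows (Matrix.fromCols A1 C1) (Matrix.fromCols D1 E1)) : ℤ)) - ((rk (Matrix.fromCols A1 C1) : ℤ)) - ((rk (Matrix.fromRows A1 D1) : ℤ))) (((rk (Matrix.fromRows (Matrix.fromCols A1 B1) (Matrix.fromCols F1 G1)) : ℤ)) - ((rk (Matrix.fromCols A1 B1) : ℤ)) - ((rk (Matrix.fromRows A1 F1) : ℤ)))) ≤ (rk (Matrix.fromRows (Matrix.fromRows (Matrix.fromCols (Matrix.fromCols A1 B1) C1) (Matrix.fromCols (Matrix.fromCols D1 X) E1)) (Matrix.fromCols (Matrix.fromCols F1 G1) Y)) : ℤ)) := by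
  classical
  set V1 := (Fin n' → H) with hV1def
  set V2 := (Fin m' → H) with hV2def
  set V3 := (Fin p' → H) with hV3def
  set colA : Fin n → V1 := fun j i => A1 i j with hcolA
  set colB : Fin m → V1 := fun j i => B1 i j with hcolB
  set colC : Fin p → V1 := fun j i => C1 i j with hcolC
  set colD : Fin n → V2 := fun j i => D1 i j with hcolD
  set colE : Fin p → V2 := fun j i => E1 i j with hcolE
  set colF : Fin n → V3 := fun j i => F1 i j with hcolF
  set colG : Fin m → V3 := fun j i => G1 i j with hcolG
  set fU : Fin n → V1 × V2 × V3 := fun j => (colA j, colD j, colF j) with hfU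
  set fS : Fin m → V1 × V3 := fun j => (colB j, colG j) with hfS
  set fT : Fin p → V1 × V2 := fun j => (colC j, colE j) with hfT
  set U := Submodule.span Hᵐᵒᵖ (Set.range fU) with hUdef
  set S := Submodule.span Hᵐᵒᵖ (Set.range fS) with hSdef
  set T := Submodule.span Hᵐᵒᵖ (Set.range fT) with hTdef
  -- identifications of projections
  have h1U : Submodule.map (pr1 Hᵐᵒᵖ V1 V2 V3) U
      = Submodule.span Hᵐᵒᵖ (Set.range colA) := map_span_range _ fU
  have h12U : Submodule.map (pr12 Hᵐᵒᵖ V1 V2 V3) U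
      = Submodule.span Hᵐᵒᵖ (Set.range fun j => ((colA j, colD j) : V1 × V2)) :=
    map_span_range _ fU
  have h13U : Submodule.map (pr13 Hᵐᵒᵖ V1 V2 V3) U
      = Submodule.span Hᵐᵒᵖ (Set.range fun j => ((colA j, colF j) : V1 × V3)) :=
    map_span_range _ fU
  have hr1S : Submodule.map (LinearMap.fst Hᵐᵒᵖ V1 V3) S
      = Submodule.span Hᵐᵒᵖ (Set.range colB) := map_span_range _ fS
  have hq1T : Submodule.map (LinearMap.fst Hᵐᵒᵖ V1 V2) T
      = Submodule.span Hᵐᵒᵖ (Set.range colC) := map_span_range _ fT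
  -- rank identifications
  have ha : rk (Matrix.fromCols (Matrix.fromCols A1 B1) C1)
      = finrank Hᵐᵒᵖ ↥(Submodule.map (pr1 Hᵐᵒᵖ V1 V2 V3) U
          ⊔ Submodule.map (LinearMap.fst Hᵐᵒᵖ V1 V3) S
          ⊔ Submodule.map (LinearMap.fst Hᵐᵒᵖ V1 V2) T) := by
    rw [rk_def, h1U, hr1S, hq1T,
      show (fun j (i : Fin n') => (Matrix.fromCols (Matrix.fromCols A1 B1) C1) i j)
        = Sum.elim (Sum.elim colA colB) colC from funext fun j => by
          rcases j with (j | j) | j <;> rfl,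
      span_range_sum, span_range_sum]
  have hb : rk (Matrix.fromRows (Matrix.fromRows A1 D1) F1) = finrank Hᵐᵒᵖ U := by
    rw [rk_def]
    exact (finrank_span_equiv (etriple (Fin n') (Fin m') (Fin p'))
      (fun j (i : (Fin n' ⊕ Fin m') ⊕ Fin p') =>
        (Matrix.fromRows (Matrix.fromRows A1 D1) F1) i j)).symm
  have hACDE : rk (Matrix.fromRows (Matrix.fromCols A1 C1) (Matrix.fromCols D1 E1))
      = finrank Hᵐᵒᵖ ↥(Submodule.map (pr12 Hᵐᵒᵖ V1 V2 V3) U ⊔ T) := by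
    have heq : (fun j => (esum (Fin n') (Fin m'))
        (fun i => (Matrix.fromRows (Matrix.fromCols A1 C1) (Matrix.fromCols D1 E1)) i j))
        = Sum.elim (fun j => ((colA j, colD j) : V1 × V2)) fT :=
      funext fun j => by rcases j with j | j <;> rfl
    rw [rk_def, ← finrank_span_equiv (esum (Fin n') (Fin m')), heq, span_range_sum, h12U]
  have hAC : rk (Matrix.fromCols A1 C1)
      = finrank Hᵐᵒᵖ ↥(Submodule.map (pr1 Hᵐᵒᵖ V1 V2 V3) U
          ⊔ Submodule.map (LinearMap.fst Hᵐᵒᵖ V1 V2) T) := by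
    rw [rk_def, h1U, hq1T,
      show (fun j (i : Fin n') => (Matrix.fromCols A1 C1) i j)
        = Sum.elim colA colC from funext fun j => by rcases j with j | j <;> rfl,
      span_range_sum]
  have hAD : rk (Matrix.fromRows A1 D1)
      = finrank Hᵐᵒᵖ ↥(Submodule.map (pr12 Hᵐᵒᵖ V1 V2 V3) U) := by
    rw [rk_def, h12U]
    exact (finrank_span_equiv (esum (Fin n') (Fin m'))
      (fun j (i : Fin n' ⊕ Fin m') => (Matrix.fromRows A1 D1) i j)).symm
  have hABFG : rk (Matrix.fromRows (Matrix.fromCols A1 B1) (Matrix.fromCols F1 G1))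
      = finrank Hᵐᵒᵖ ↥(Submodule.map (pr13 Hᵐᵒᵖ V1 V2 V3) U ⊔ S) := by
    have heq : (fun j => (esum (Fin n') (Fin p'))
        (fun i => (Matrix.fromRows (Matrix.fromCols A1 B1) (Matrix.fromCols F1 G1)) i j))
        = Sum.elim (fun j => ((colA j, colF j) : V1 × V3)) fS :=
      funext fun j => by rcases j with j | j <;> rfl
    rw [rk_def, ← finrank_span_equiv (esum (Fin n') (Fin p')), heq, span_range_sum, h13U]
  have hAB : rk (Matrix.fromCols A1 B1)
      = finrank Hᵐᵒᵖ ↥(Submodule.map (pr1 Hᵐᵒᵖ V1 V2 V3) U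
          ⊔ Submodule.map (LinearMap.fst Hᵐᵒᵖ V1 V3) S) := by
    rw [rk_def, h1U, hr1S,
      show (fun j (i : Fin n') => (Matrix.fromCols A1 B1) i j)
        = Sum.elim colA colB from funext fun j => by rcases j with j | j <;> rfl,
      span_range_sum]
  have hAF : rk (Matrix.fromRows A1 F1)
      = finrank Hᵐᵒᵖ ↥(Submodule.map (pr13 Hᵐᵒᵖ V1 V2 V3) U) := by
    rw [rk_def, h13U]
    exact (finrank_span_equiv (esum (Fin n') (Fin p'))
      (fun j (i : Fin n' ⊕ Fin p') => (Matrix.fromRows A1 F1) i j)).symm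
  -- big matrix
  set SX : Matrix (Fin m') (Fin m) H → Submodule Hᵐᵒᵖ (V1 × V2 × V3) :=
    fun X => Submodule.span Hᵐᵒᵖ
      (Set.range fun j => ((colB j, fun i => X i j, colG j) : V1 × V2 × V3)) with hSXdef
  set TY : Matrix (Fin p') (Fin p) H → Submodule Hᵐᵒᵖ (V1 × V2 × V3) :=
    fun Y => Submodule.span Hᵐᵒᵖ
      (Set.range fun j => ((colC j, colE j, fun i => Y i j) : V1 × V2 × V3)) with hTYdef
  have hbig : ∀ (X : Matrix (Fin m') (Fin m) H) (Y : Matrix (Fin p') (Fin p) H),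
      rk (Matrix.fromRows (Matrix.fromRows (Matrix.fromCols (Matrix.fromCols A1 B1) C1)
          (Matrix.fromCols (Matrix.fromCols D1 X) E1))
          (Matrix.fromCols (Matrix.fromCols F1 G1) Y))
        = finrank Hᵐᵒᵖ ↥(U ⊔ SX X ⊔ TY Y) := by
    intro X Y
    have heq : (fun j => (etriple (Fin n') (Fin m') (Fin p'))
        (fun i => (Matrix.fromRows (Matrix.fromRows (Matrix.fromCols (Matrix.fromCols A1 B1) C1)
          (Matrix.fromCols (Matrix.fromCols D1 X) E1))
          (Matrix.fromCols (Matrix.fromCols F1 G1) Y)) i j))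
        = Sum.elim (Sum.elim fU (fun j => ((colB j, fun i => X i j, colG j) : V1 × V2 × V3)))
            (fun j => ((colC j, colE j, fun i => Y i j) : V1 × V2 × V3)) :=
      funext fun j => by rcases j with (j | j) | j <;> rfl
    rw [rk_def, ← finrank_span_equiv (etriple (Fin n') (Fin m') (Fin p')), heq,
      span_range_sum, span_range_sum]
  -- conditions for arbitrary X Y
  have hScond : ∀ X Y, S ≤ Submodule.map (pr13 Hᵐᵒᵖ V1 V2 V3) (U ⊔ SX X ⊔ TY Y) := by
    intro X Y
    have h : Submodule.map (pr13 Hᵐᵒᵖ V1 V2 V3) (SX X) = S :=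
      map_span_range _ _
    rw [← h]
    exact Submodule.map_mono (le_trans le_sup_right le_sup_left)
  have hTcond : ∀ X Y, T ≤ Submodule.map (pr12 Hᵐᵒᵖ V1 V2 V3) (U ⊔ SX X ⊔ TY Y) := by
    intro X Y
    have h : Submodule.map (pr12 Hᵐᵒᵖ V1 V2 V3) (TY Y) = T :=
      map_span_range _ _
    rw [← h]
    exact Submodule.map_mono le_sup_right
  -- the lower bound for all X Y
  have hLB : ∀ (X : Matrix (Fin m') (Fin m) H) (Y : Matrix (Fin p') (Fin p) H),
      (((rk (Matrix.fromCols (Matrix.fromCols A1 B1) C1) : ℤ))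
        + ((rk (Matrix.fromRows (Matrix.fromRows A1 D1) F1) : ℤ))
        + max (((rk (Matrix.fromRows (Matrix.fromCols A1 C1) (Matrix.fromCols D1 E1)) : ℤ))
            - ((rk (Matrix.fromCols A1 C1) : ℤ)) - ((rk (Matrix.fromRows A1 D1) : ℤ)))
          (((rk (Matrix.fromRows (Matrix.fromCols A1 B1) (Matrix.fromCols F1 G1)) : ℤ))
            - ((rk (Matrix.fromCols A1 B1) : ℤ)) - ((rk (Matrix.fromRows A1 F1) : ℤ))))
        ≤ (rk (Matrix.fromRows (Matrix.fromRows (Matrix.fromCols (Matrix.fromCols A1 B1) C1)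
            (Matrix.fromCols (Matrix.fromCols D1 X) E1))
            (Matrix.fromCols (Matrix.fromCols F1 G1) Y)) : ℤ) := by
    intro X Y
    rw [ha, hb, hACDE, hAC, hAD, hABFG, hAB, hAF, hbig X Y]
    exact (abstract_minrank U S T).2 (U ⊔ SX X ⊔ TY Y) (le_trans le_sup_left le_sup_left)
      (hScond X Y) (hTcond X Y)
  refine ⟨?_, hLB⟩
  -- existence
  obtain ⟨W, hUW, hSW, hTW, hdim⟩ := (abstract_minrank U S T).1
  have hselS : ∀ j : Fin m, ∃ w, w ∈ W ∧ (pr13 Hᵐᵒᵖ V1 V2 V3) w = fS j := by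
    intro j
    have := hSW (Submodule.subset_span ⟨j, rfl⟩)
    obtain ⟨w, hw, hweq⟩ := Submodule.mem_map.1 this
    exact ⟨w, hw, hweq⟩
  have hselT : ∀ j : Fin p, ∃ w, w ∈ W ∧ (pr12 Hᵐᵒᵖ V1 V2 V3) w = fT j := by
    intro j
    have := hTW (Submodule.subset_span ⟨j, rfl⟩)
    obtain ⟨w, hw, hweq⟩ := Submodule.mem_map.1 this
    exact ⟨w, hw, hweq⟩
  choose wX hwXW hwX13 using hselS
  choose wY hwYW hwY12 using hselT
  refine ⟨fun i j => (wX j).2.1 i, fun i j => (wY j).2.2 i, ?_⟩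
  set X : Matrix (Fin m') (Fin m) H := fun i j => (wX j).2.1 i with hXdef
  set Y : Matrix (Fin p') (Fin p) H := fun i j => (wY j).2.2 i with hYdef
  have hfX : ∀ j, ((colB j, fun i => X i j, colG j) : V1 × V2 × V3) = wX j := by
    intro j
    have h1 : (wX j).1 = colB j := congrArg Prod.fst (hwX13 j)
    have h2 : (wX j).2.2 = colG j := congrArg Prod.snd (hwX13 j)
    refine Prod.ext h1.symm (Prod.ext rfl h2.symm)
  have hfY : ∀ j, ((colC j, colE j, fun i => Y i j) : V1 × V2 × V3) = wY j := by
    intro j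
    have h1 : (wY j).1 = colC j := congrArg Prod.fst (hwY12 j)
    have h2 : (wY j).2.1 = colE j := congrArg Prod.snd (hwY12 j)
    refine Prod.ext h1.symm (Prod.ext h2.symm rfl)
  have hWW : U ⊔ SX X ⊔ TY Y ≤ W := by
    refine sup_le (sup_le hUW ?_) ?_
    · refine Submodule.span_le.2 ?_
      rintro _ ⟨j, rfl⟩
      show ((colB j, fun i => X i j, colG j) : V1 × V2 × V3) ∈ W
      rw [hfX j]
      exact hwXW j
    · refine Submodule.span_le.2 ?_
      rintro _ ⟨j, rfl⟩
      show ((colC j, colE j, fun i => Y i j) : V1 × V2 × V3) ∈ W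
      rw [hfY j]
      exact hwYW j
  rw [ha, hb, hACDE, hAC, hAD, hABFG, hAB, hAF, hbig X Y]
  refine le_antisymm ?_ ?_
  · refine le_trans ?_ hdim
    exact_mod_cast Submodule.finrank_mono hWW
  · exact (abstract_minrank U S T).2 (U ⊔ SX X ⊔ TY Y) (le_trans le_sup_left le_sup_left)
      (hScond X Y) (hTcond X Y)
end

section
/- Let A1 ∈ ℍ^{p×q}, B1 ∈ ℍ^{p×m}, D1 ∈ ℍ^{n×q} be given quaternion matrices. Then the maximum of r([Y D1; B1 A1]) over all Y ∈ ℍ^{n×m} equals min{ n + r([B1 A1]), m + r([D1; A1]) }, and the minimum of r([Y D1; B1 A1]) over all Y ∈ ℍ^{n×m} equals r([B1 A1]) + r([D1; A1]) − r(A1); in each case the extremal value is attained by some Y and bounds the rank for every Y. -/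
open Matrix

section Abstract
open Module Submodule LinearMap

variable {K : Type*} [DivisionRing K] {V W : Type*} [AddCommGroup V] [Module K V]
  [AddCommGroup W] [Module K W]

lemma H1 [FiniteDimensional K V] (f : V →ₗ[K] W) (p : Submodule K V) :
    finrank K (p.map f) + finrank K (p ⊓ ker f : Submodule K V) = finrank K p := by
  have h := LinearMap.finrank_range_add_finrank_ker (f.domRestrict p)
  rw [LinearMap.range_domRestrict, LinearMap.ker_domRestrict] at h
  rw [← h]
  congr 1
  have e1 : comap p.subtype (ker f) = comap p.subtype (ker f ⊓ p) := by ext x; simp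
  rw [e1, (Submodule.comapSubtypeEquivOfLe (inf_le_right : ker f ⊓ p ≤ p)).finrank_eq, inf_comm]

lemma H2 [FiniteDimensional K V] (f : V →ₗ[K] W) (p : Submodule K V) :
    finrank K (p.map f) + finrank K (ker f) = finrank K (p ⊔ ker f : Submodule K V) := by
  have h := H1 f (p ⊔ ker f)
  have hk : (ker f).map f = ⊥ := le_bot_iff.mp (Submodule.map_le_iff_le_comap.mpr le_rfl)
  have e1 : (p ⊔ ker f).map f = p.map f := by rw [Submodule.map_sup, hk, sup_bot_eq]
  have e2 : (p ⊔ ker f) ⊓ ker f = ker f := inf_eq_right.mpr le_sup_right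
  rw [e1, e2] at h
  exact h

lemma L0 [FiniteDimensional K V] {p : Submodule K V} {x : V} (hx : x ∉ p) :
    finrank K (p ⊔ K ∙ x : Submodule K V) = finrank K p + 1 := by
  have hx0 : x ≠ 0 := fun h => hx (h ▸ p.zero_mem)
  have hinf : p ⊓ (K ∙ x) = ⊥ := by
    rw [eq_bot_iff]
    rintro y ⟨hyp, hyx⟩
    obtain ⟨a, rfl⟩ := Submodule.mem_span_singleton.mp hyx
    rcases eq_or_ne a 0 with rfl | ha
    · simp
    · exact absurd ((Submodule.smul_mem_iff _ ha).mp hyp) hx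
  have := Submodule.finrank_sup_add_finrank_inf_eq p (K ∙ x)
  rw [hinf, finrank_bot, add_zero, finrank_span_singleton hx0] at this
  exact this
lemma lemL [FiniteDimensional K V] (U : Submodule K V) :
    ∀ {m : ℕ} (c : Fin m → V ⧸ U), ∃ v : Fin m → V, (∀ j, U.mkQ (v j) = c j) ∧
      finrank K (span K (Set.range v)) =
        min m (finrank K U + finrank K (span K (Set.range c))) := by
  intro m
  induction m with
  | zero =>
    intro c
    refine ⟨Fin.elim0, fun j => j.elim0, ?_⟩
    simp [Set.range_eq_empty]
  | succ m ih =>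
    intro c
    obtain ⟨v', hv', hdim⟩ := ih (fun j => c j.succ)
    set P' : Submodule K V := span K (Set.range v') with hP'
    set SC' : Submodule K (V ⧸ U) := span K (Set.range fun j : Fin m => c j.succ) with hSC'
    have hrange : Set.range c = insert (c 0) (Set.range fun j : Fin m => c j.succ) :=
      Fin.range_fin_succ c
    have hmapP' : P'.map U.mkQ = SC' := by
      rw [hP', Submodule.map_span, ← Set.range_comp]
      rw [show (U.mkQ ∘ v') = fun j => c j.succ from funext hv']
    by_cases hex : ∃ x, U.mkQ x = c 0 ∧ x ∉ P'
    · obtain ⟨x, hxq, hxP⟩ := hex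
      refine ⟨Fin.cons x v', fun j => ?_, ?_⟩
      · refine Fin.cases ?_ ?_ j
        · simpa using hxq
        · intro i; simpa using hv' i
      · rw [Fin.range_cons, Submodule.span_insert, sup_comm, hrange]
        rw [L0 (p := P') hxP, hdim]
        by_cases hc0 : c 0 ∈ SC'
        · rw [Submodule.span_insert_eq_span hc0, ← hSC']
          -- claim : m < finrank U + finrank SC'
          have hlt : m < finrank K U + finrank K SC' := by
            by_contra hge
            push_neg at hge
            -- then P' = comap mkQ SC' and x gives contradiction
            set F' : Submodule K V := comap U.mkQ SC' with hF'
            have hPF : P' ≤ F' := by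
              rw [← Submodule.map_le_iff_le_comap, hmapP']
            have hFrank : finrank K F' = finrank K U + finrank K SC' := by
              have h1 := H1 U.mkQ F'
              have e1 : F'.map U.mkQ = SC' :=
                Submodule.map_comap_eq_self (by rw [range_mkQ]; exact le_top)
              have e2 : F' ⊓ ker U.mkQ = U := by
                rw [ker_mkQ]
                exact inf_eq_right.mpr (fun u hu => by
                  simp only [hF', mem_comap]
                  rw [show U.mkQ u = 0 from (Submodule.Quotient.mk_eq_zero U).mpr hu]
                  exact SC'.zero_mem)
              rw [e1, e2] at h1
              omega
            have hPrank : finrank K P' = finrank K F' := by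
              rw [hFrank, hdim]
              omega
            have : P' = F' := Submodule.eq_of_le_of_finrank_le hPF (le_of_eq hPrank.symm)
            apply hxP
            rw [this, hF']
            simpa [mem_comap, hxq] using hc0
          omega
        · have : finrank K (span K (insert (c 0) (Set.range fun j : Fin m => c j.succ))) =
              finrank K SC' + 1 := by
            rw [Submodule.span_insert, sup_comm]
            exact L0 (fun h => hc0 h)
          rw [this]
          omega
    · push_neg at hex
      obtain ⟨x, hxq⟩ := U.mkQ_surjective (c 0)
      have hxP : x ∈ P' := hex x hxq
      refine ⟨Fin.cons x v', fun j => ?_, ?_⟩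
      · refine Fin.cases ?_ ?_ j
        · simpa using hxq
        · intro i; simpa using hv' i
      · rw [Fin.range_cons, Submodule.span_insert, sup_comm]
        have hsup : P' ⊔ (K ∙ x) = P' := sup_eq_left.mpr ((Submodule.span_singleton_le_iff_mem x P').mpr hxP)
        rw [hsup]
        -- c 0 ∈ SC'
        have hc0 : c 0 ∈ SC' := by
          rw [← hxq, ← hmapP']
          exact Submodule.mem_map_of_mem hxP
        have hUP : U ≤ P' := by
          intro u hu
          have h0 : U.mkQ u = 0 := (Submodule.Quotient.mk_eq_zero U).mpr hu
          have : U.mkQ (x + u) = c 0 := by rw [map_add, hxq, h0, add_zero]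
          have hxu : x + u ∈ P' := hex _ this
          simpa using P'.sub_mem hxu hxP
        have hPrank : finrank K P' = finrank K U + finrank K SC' := by
          have h1 := H1 U.mkQ P'
          rw [hmapP', ker_mkQ, inf_eq_right.mpr hUP] at h1
          omega
        rw [hrange, Submodule.span_insert_eq_span hc0, ← hSC']
        rw [hdim] at hPrank ⊢
        omega
lemma finrank_map_inj [FiniteDimensional K V] (f : V →ₗ[K] W) (hf : Function.Injective f)
    (p : Submodule K V) : finrank K (p.map f) = finrank K p :=
  (Submodule.equivMapOfInjective f hf p).finrank_eq.symm

lemma finrank_prod_top [FiniteDimensional K V] [FiniteDimensional K W] (Q : Submodule K V) :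
    finrank K ((⊤ : Submodule K W).prod Q) = finrank K W + finrank K Q := by
  rw [LinearMap.prod_eq_sup_map]
  have hinf : ((⊤ : Submodule K W).map (inl K W V)) ⊓ (Q.map (inr K W V)) = ⊥ := by
    rw [eq_bot_iff]
    rintro x ⟨h1, h2⟩
    obtain ⟨a, -, rfl⟩ := h1
    obtain ⟨b, -, hb⟩ := h2
    simp only [coe_inl, coe_inr] at hb
    have h2' : a = 0 := by
      have := congrArg Prod.snd hb
      simp at this
      have := congrArg Prod.fst hb
      simp at this
      simp [this]
    simp [h2']
  have := Submodule.finrank_sup_add_finrank_inf_eq ((⊤ : Submodule K W).map (inl K W V))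
    (Q.map (inr K W V))
  rw [hinf, finrank_bot, add_zero, finrank_map_inj _ (inl_injective) _,
    finrank_map_inj _ (inr_injective) _, finrank_top] at this
  exact this
lemma AL_ub [FiniteDimensional K W] [FiniteDimensional K V] (T : Submodule K (W × V))
    {m : ℕ} (b : Fin m → V) (y : Fin m → W)
    (hfpt : ∀ Q : Submodule K V, finrank K ((⊤ : Submodule K W).prod Q) = finrank K W + finrank K Q) :
    finrank K (T ⊔ span K (Set.range fun j => (y j, b j)) : Submodule K (W × V)) ≤
      min (finrank K W +
        finrank K (span K (Set.range b) ⊔ T.map (LinearMap.snd K W V) : Submodule K V))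
        (m + finrank K T) := by
  refine le_min ?_ ?_
  · have hle : T ⊔ span K (Set.range fun j => (y j, b j)) ≤
        (⊤ : Submodule K W).prod (span K (Set.range b) ⊔ T.map (LinearMap.snd K W V)) := by
      refine sup_le ?_ ?_
      · intro x hx
        exact ⟨trivial, mem_sup_right ⟨x, hx, rfl⟩⟩
      · rw [span_le]
        rintro _ ⟨j, rfl⟩
        exact ⟨trivial, mem_sup_left (subset_span ⟨j, rfl⟩)⟩
    calc finrank K _ ≤ _ := Submodule.finrank_mono hle
      _ = _ := hfpt _
  · refine le_trans (Submodule.finrank_add_le_finrank_add_finrank _ _) ?_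
    rw [add_comm]
    gcongr
    simpa [Set.finrank] using finrank_range_le_card (R := K) (fun j : Fin m => (y j, b j))
lemma AL_lb [FiniteDimensional K W] [FiniteDimensional K V] (T : Submodule K (W × V))
    {m : ℕ} (b : Fin m → V) (y : Fin m → W) :
    finrank K (span K (Set.range b) ⊔ T.map (LinearMap.snd K W V) : Submodule K V)
      + finrank K T ≤
    finrank K (T ⊔ span K (Set.range fun j => (y j, b j)) : Submodule K (W × V))
      + finrank K (T.map (LinearMap.snd K W V)) := by
  set U : Submodule K V := T.map (LinearMap.snd K W V) with hU
  set S : Submodule K (W × V) := T ⊔ span K (Set.range fun j => (y j, b j)) with hS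
  set ψ : (W × V) →ₗ[K] V ⧸ U := U.mkQ.comp (LinearMap.snd K W V) with hψ
  have hTker : T ≤ ker ψ := by
    intro x hx
    have hx2 : x.2 ∈ U := ⟨x, hx, rfl⟩
    simp only [hψ, mem_ker, LinearMap.comp_apply, LinearMap.snd_apply]
    exact (Submodule.Quotient.mk_eq_zero U).mpr hx2
  -- finrank S = finrank (map ψ S) + finrank (S ⊓ ker ψ)
  have h1 := H1 ψ S
  have hT_le : finrank K T ≤ finrank K (S ⊓ ker ψ : Submodule K (W × V)) :=
    Submodule.finrank_mono (le_inf le_sup_left hTker)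
  -- map ψ S ⊇ map mkQ (span b)
  have hmap_ge : (span K (Set.range b)).map U.mkQ ≤ S.map ψ := by
    rw [Submodule.map_span]
    rw [span_le]
    rintro _ ⟨_, ⟨j, rfl⟩, rfl⟩
    refine ⟨(y j, b j), mem_sup_right (subset_span ⟨j, rfl⟩), rfl⟩
  have h2 := H2 U.mkQ (span K (Set.range b))
  rw [ker_mkQ] at h2
  have hmono := Submodule.finrank_mono hmap_ge
  omega

lemma AL_decomp [FiniteDimensional K V] (T : Submodule K (W × V)) {m : ℕ} (b : Fin m → V) :
    ∃ (C : Submodule K V) (w : Fin m → W) (cc : Fin m → V),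
      IsCompl (T.map (LinearMap.snd K W V)) C ∧ (∀ j, cc j ∈ C) ∧
        (∀ j, (w j, b j - cc j) ∈ T) := by
  obtain ⟨C, hC⟩ := Submodule.exists_isCompl (T.map (LinearMap.snd K W V))
  have h : ∀ j : Fin m, ∃ (wj : W) (cj : V), cj ∈ C ∧ (wj, b j - cj) ∈ T := by
    intro j
    obtain ⟨u, c, hu, hc, hsum⟩ := Submodule.codisjoint_iff_exists_add_eq.mp hC.codisjoint (b j)
    obtain ⟨t, ht, hts⟩ := hu
    refine ⟨t.1, c, hc, ?_⟩
    have h1 : b j - c = u := by rw [← hsum]; abel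
    have h2 : (t.1, b j - c) = t := by
      rw [h1, ← hts]
      rfl
    rw [h2]; exact ht
  choose w cc hcc hT using h
  exact ⟨C, w, cc, hC, hcc, hT⟩

lemma H3 (T : Submodule K (W × V)) {m : ℕ} (b cc : Fin m → V) (w z : Fin m → W)
    (hT : ∀ j, (w j, b j - cc j) ∈ T) :
    T ⊔ span K (Set.range fun j => (z j + w j, b j)) =
      T ⊔ span K (Set.range fun j => (z j, cc j)) := by
  apply le_antisymm <;> refine sup_le le_sup_left ?_ <;> rw [span_le] <;> rintro _ ⟨j, rfl⟩
  · have h : (z j + w j, b j) = (w j, b j - cc j) + (z j, cc j) := by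
      ext
      · simp [add_comm]
      · simp
    show (z j + w j, b j) ∈ (T ⊔ span K (Set.range fun j => (z j, cc j)) : Submodule K (W × V))
    rw [h]
    exact add_mem (mem_sup_left (hT j)) (mem_sup_right (subset_span ⟨j, rfl⟩))
  · have h : (z j, cc j) = (z j + w j, b j) - (w j, b j - cc j) := by
      ext
      · simp
      · simp
    show (z j, cc j) ∈ (T ⊔ span K (Set.range fun j => (z j + w j, b j)) : Submodule K (W × V))
    rw [h]
    exact sub_mem (mem_sup_right (subset_span ⟨j, rfl⟩)) (mem_sup_left (hT j))

lemma Esup [FiniteDimensional K V] (T : Submodule K (W × V)) {m : ℕ} (b cc : Fin m → V)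
    (w : Fin m → W) (C : Submodule K V) (hC : IsCompl (T.map (LinearMap.snd K W V)) C)
    (hcc : ∀ j, cc j ∈ C) (hT : ∀ j, (w j, b j - cc j) ∈ T) :
    span K (Set.range cc) ⊔ T.map (LinearMap.snd K W V) =
        span K (Set.range b) ⊔ T.map (LinearMap.snd K W V) := by
  set U := T.map (LinearMap.snd K W V)
  have hbU : ∀ j, b j - cc j ∈ U := fun j => ⟨_, hT j, rfl⟩
  apply le_antisymm <;> refine sup_le ?_ le_sup_right <;> rw [span_le] <;> rintro _ ⟨j, rfl⟩
  · have : cc j = b j - (b j - cc j) := by abel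
    rw [this]
    exact sub_mem (mem_sup_left (subset_span ⟨j, rfl⟩)) (mem_sup_right (hbU j))
  · have : b j = cc j + (b j - cc j) := by abel
    rw [this]
    exact add_mem (mem_sup_left (subset_span ⟨j, rfl⟩)) (mem_sup_right (hbU j))

lemma Einf [FiniteDimensional K V] (T : Submodule K (W × V)) {m : ℕ} (cc : Fin m → V)
    (C : Submodule K V) (hC : IsCompl (T.map (LinearMap.snd K W V)) C)
    (hcc : ∀ j, cc j ∈ C) :
    span K (Set.range cc) ⊓ T.map (LinearMap.snd K W V) = ⊥ := by
  rw [eq_bot_iff]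
  rintro x ⟨hx1, hx2⟩
  have hle : span K (Set.range cc) ≤ C := by
    rw [span_le]; rintro _ ⟨j, rfl⟩; exact hcc j
  have h1 : x ∈ C := hle hx1
  rw [Submodule.mem_bot]
  exact Submodule.disjoint_def.mp hC.disjoint x hx2 h1

lemma finrank_E [FiniteDimensional K V] (T : Submodule K (W × V)) {m : ℕ} (b cc : Fin m → V)
    (w : Fin m → W) (C : Submodule K V) (hC : IsCompl (T.map (LinearMap.snd K W V)) C)
    (hcc : ∀ j, cc j ∈ C) (hT : ∀ j, (w j, b j - cc j) ∈ T) :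
    finrank K (span K (Set.range cc)) + finrank K (T.map (LinearMap.snd K W V)) =
      finrank K (span K (Set.range b) ⊔ T.map (LinearMap.snd K W V) : Submodule K V) := by
  have h := Submodule.finrank_sup_add_finrank_inf_eq (span K (Set.range cc))
    (T.map (LinearMap.snd K W V))
  rw [Einf T cc C hC hcc, finrank_bot, add_zero, Esup T b cc w C hC hcc hT] at h
  omega

lemma AL_min [FiniteDimensional K W] [FiniteDimensional K V] (T : Submodule K (W × V))
    {m : ℕ} (b : Fin m → V) :
    ∃ y : Fin m → W,
      finrank K (T ⊔ span K (Set.range fun j => (y j, b j)) : Submodule K (W × V))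
        + finrank K (T.map (LinearMap.snd K W V)) =
      finrank K (span K (Set.range b) ⊔ T.map (LinearMap.snd K W V) : Submodule K V)
        + finrank K T := by
  obtain ⟨C, w, cc, hC, hcc, hT⟩ := AL_decomp T b
  refine ⟨fun j => (0 : W) + w j, ?_⟩
  rw [H3 T b cc w (fun _ => 0) hT]
  have hX : span K (Set.range fun j => ((0 : W), cc j)) =
      (span K (Set.range cc)).map (LinearMap.inr K W V) := by
    rw [Submodule.map_span, ← Set.range_comp]; rfl
  rw [hX]
  have hinf : T ⊓ (span K (Set.range cc)).map (LinearMap.inr K W V) = ⊥ := by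
    rw [eq_bot_iff]; rintro x ⟨hxT, hxX⟩
    obtain ⟨e, he, rfl⟩ := hxX
    have h2 : e ∈ T.map (LinearMap.snd K W V) := ⟨_, hxT, by simp⟩
    have hle : span K (Set.range cc) ≤ C := span_le.mpr (by rintro _ ⟨j, rfl⟩; exact hcc j)
    have he0 : e = 0 := Submodule.disjoint_def.mp hC.disjoint e h2 (hle he)
    rw [Submodule.mem_bot, he0]
    simp
  have h1 := Submodule.finrank_sup_add_finrank_inf_eq T
    ((span K (Set.range cc)).map (LinearMap.inr K W V))
  rw [hinf, finrank_bot, add_zero, finrank_map_inj _ inr_injective] at h1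
  have h2 := finrank_E T b cc w C hC hcc hT
  omega

lemma AL_max [FiniteDimensional K W] [FiniteDimensional K V] (T : Submodule K (W × V))
    {m : ℕ} (b : Fin m → V) :
    ∃ y : Fin m → W,
      finrank K (T ⊔ span K (Set.range fun j => (y j, b j)) : Submodule K (W × V)) =
      min (finrank K W +
          finrank K (span K (Set.range b) ⊔ T.map (LinearMap.snd K W V) : Submodule K V))
        (m + finrank K T) := by
  obtain ⟨C, w, cc, hC, hcc, hT⟩ := AL_decomp T b
  set U := T.map (LinearMap.snd K W V) with hU
  set E := span K (Set.range cc) with hE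
  set μ := T.mkQ with hμ
  set ν : W →ₗ[K] (W × V) ⧸ T := μ.comp (LinearMap.inl K W V) with hν
  set Uq := LinearMap.range ν with hUq
  set γ : Fin m → (W × V) ⧸ T := fun j => μ (LinearMap.inr K W V (cc j)) with hγ
  obtain ⟨v, hv, hvdim⟩ := lemL Uq (fun j => Uq.mkQ (γ j))
  have hz : ∀ j, ∃ zj : W, ν zj = v j - γ j := by
    intro j
    have h0 : Uq.mkQ (v j - γ j) = 0 := by rw [map_sub, hv]; simp
    have hm : v j - γ j ∈ Uq := by
      rwa [← Submodule.Quotient.mk_eq_zero Uq]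
    exact hm
  choose z hzspec using hz
  refine ⟨fun j => z j + w j, ?_⟩
  rw [H3 T b cc w z hT]
  set X := span K (Set.range fun j => (z j, cc j)) with hXdef
  have hgen : ∀ j, μ ((z j, cc j)) = v j := by
    intro j
    have h1 : ((z j, cc j) : W × V) =
        LinearMap.inl K W V (z j) + LinearMap.inr K W V (cc j) := by ext <;> simp
    rw [h1, map_add]
    have h2 : μ (LinearMap.inl K W V (z j)) = v j - γ j := hzspec j
    rw [h2]
    have h3 : μ (LinearMap.inr K W V (cc j)) = γ j := rfl
    rw [h3]
    abel
  have hTmap : T.map μ = ⊥ :=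
    le_bot_iff.mp (Submodule.map_le_iff_le_comap.mpr (le_of_eq (ker_mkQ T).symm))
  have hmap : (T ⊔ X).map μ = span K (Set.range v) := by
    rw [Submodule.map_sup, hTmap, bot_sup_eq, hXdef, Submodule.map_span, ← Set.range_comp]
    rw [show (μ ∘ fun j => (z j, cc j)) = v from funext hgen]
  have hrank1 : finrank K (T ⊔ X : Submodule K (W × V)) =
      finrank K T + finrank K (span K (Set.range v)) := by
    have h := H1 μ (T ⊔ X)
    rw [hmap, ker_mkQ, inf_eq_right.mpr le_sup_left] at h
    omega
  have ha := H2 Uq.mkQ (span K (Set.range γ))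
  rw [ker_mkQ] at ha
  have ha2 : (span K (Set.range γ)).map Uq.mkQ =
      span K (Set.range fun j => Uq.mkQ (γ j)) := by
    rw [Submodule.map_span, ← Set.range_comp]; rfl
  rw [ha2] at ha
  have hb : span K (Set.range γ) ⊔ Uq = ((⊤ : Submodule K W).prod E).map μ := by
    rw [LinearMap.prod_eq_sup_map, Submodule.map_sup, sup_comm]
    congr 1
    · rw [hUq, ← Submodule.map_top, hν, ← Submodule.map_comp]
    · rw [hE, Submodule.map_span, Submodule.map_span, ← Set.range_comp, ← Set.range_comp]
      rfl
  have hc := H2 μ ((⊤ : Submodule K W).prod E)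
  rw [ker_mkQ] at hc
  have hd : ((⊤ : Submodule K W).prod E) ⊔ T = (⊤ : Submodule K W).prod (E ⊔ U) := by
    apply le_antisymm
    · refine sup_le ?_ ?_
      · rintro x ⟨h1, h2⟩
        exact ⟨trivial, mem_sup_left h2⟩
      · intro x hx
        exact ⟨trivial, mem_sup_right ⟨x, hx, rfl⟩⟩
    · rintro ⟨xw, xv⟩ ⟨-, hxv⟩
      obtain ⟨e, he, u, hu, hsum⟩ := mem_sup.mp hxv
      obtain ⟨t, ht, hts⟩ := hu
      have hxeq : ((xw, xv) : W × V) = ((xw - t.1, e) : W × V) + t := by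
        ext
        · simp
        · show xv = e + t.2
          rw [show t.2 = u from hts]
          exact hsum.symm
      rw [hxeq]
      exact add_mem (mem_sup_left ⟨trivial, he⟩) (mem_sup_right ht)
  have he1 := finrank_prod_top (K := K) (W := W) (E ⊔ U)
  have he2 : E ⊔ U = span K (Set.range b) ⊔ U := Esup T b cc w C hC hcc hT
  rw [hrank1, hvdim]
  rw [hb] at ha
  rw [hd, he1, he2] at hc
  omega


end Abstract

open Module Submodule LinearMap

noncomputable def eOp : Hᵐᵒᵖ ≃ₗ[Hᵐᵒᵖ] H where
  toFun := MulOpposite.unop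
  invFun := MulOpposite.op
  map_add' := fun _ _ => rfl
  map_smul' := fun _ _ => rfl
  left_inv := fun _ => rfl
  right_inv := fun _ => rfl

instance inst_s5 : Module.Finite Hᵐᵒᵖ H := Module.Finite.equiv eOp

lemma finrank_H : finrank Hᵐᵒᵖ H = 1 := by
  rw [← eOp.finrank_eq, finrank_self]

lemma finrank_pi_H (k : ℕ) : finrank Hᵐᵒᵖ (Fin k → H) = k := by
  rw [Module.finrank_pi_fintype]
  simp [finrank_H]

lemma rk_fromRows {α β γ : Type} [Fintype α] [Fintype β] [Fintype γ]
    (X : Matrix α γ H) (Z : Matrix β γ H) :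
    rk (fromRows X Z) = finrank Hᵐᵒᵖ (span Hᵐᵒᵖ (Set.range fun j : γ =>
      ((fun i => X i j, fun i => Z i j) : (α → H) × (β → H)))) := by
  unfold rk
  set e := LinearEquiv.sumArrowLequivProdArrow α β Hᵐᵒᵖ H with he
  rw [← LinearEquiv.finrank_map_eq e, Submodule.map_span, ← Set.range_comp]
  congr 2

lemma rk_fromColumns {α γ δ : Type} [Fintype α] [Fintype γ] [Fintype δ]
    (X : Matrix α γ H) (Z : Matrix α δ H) :
    rk (fromCols X Z) = finrank Hᵐᵒᵖ
      (((span Hᵐᵒᵖ (Set.range fun j : γ => fun i => X i j)) ⊔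
       (span Hᵐᵒᵖ (Set.range fun j : δ => fun i => Z i j)) : Submodule Hᵐᵒᵖ (α → H))) := by
  unfold rk
  have hfun : (fun j : γ ⊕ δ => fun i => fromCols X Z i j) =
      Sum.elim (fun j i => X i j) (fun j i => Z i j) := by
    funext j; cases j <;> rfl
  rw [hfun, Set.Sum.elim_range, Submodule.span_union]


set_option maxHeartbeats 1000000 in
theorem stmt_5 {p q n m : ℕ}
    (A1 : Matrix (Fin p) (Fin q) H) (B1 : Matrix (Fin p) (Fin m) H)
    (D1 : Matrix (Fin n) (Fin q) H) :
    ((∃ (Y : Matrix (Fin n) (Fin m) H), (rk (Matrix.fromRows (Matrix.fromCols Y D1) (Matrix.fromCols B1 A1)) : ℤ) = (min (((n : ℤ)) + ((rk (Matrix.fromCols B1 A1) : ℤ))) (((m : ℤ)) + ((rk (Matrix.fromRows D1 A1) : ℤ))))) ∧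
      (∀ (Y : Matrix (Fin n) (Fin m) H), (rk (Matrix.fromRows (Matrix.fromCols Y D1) (Matrix.fromCols B1 A1)) : ℤ) ≤ (min (((n : ℤ)) + ((rk (Matrix.fromCols B1 A1) : ℤ))) (((m : ℤ)) + ((rk (Matrix.fromRows D1 A1) : ℤ)))))) ∧
    ((∃ (Y : Matrix (Fin n) (Fin m) H), (rk (Matrix.fromRows (Matrix.fromCols Y D1) (Matrix.fromCols B1 A1)) : ℤ) = (((rk (Matrix.fromCols B1 A1) : ℤ)) + ((rk (Matrix.fromRows D1 A1) : ℤ)) - ((rk A1 : ℤ)))) ∧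
      (∀ (Y : Matrix (Fin n) (Fin m) H), (((rk (Matrix.fromCols B1 A1) : ℤ)) + ((rk (Matrix.fromRows D1 A1) : ℤ)) - ((rk A1 : ℤ))) ≤ (rk (Matrix.fromRows (Matrix.fromCols Y D1) (Matrix.fromCols B1 A1)) : ℤ))) := by
  classical
  set T : Submodule Hᵐᵒᵖ ((Fin n → H) × (Fin p → H)) :=
    span Hᵐᵒᵖ (Set.range fun j : Fin q =>
      ((fun i => D1 i j, fun i => A1 i j) : (Fin n → H) × (Fin p → H))) with hTdef
  have hsnd : T.map (LinearMap.snd Hᵐᵒᵖ (Fin n → H) (Fin p → H)) =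
      span Hᵐᵒᵖ (Set.range fun j : Fin q => fun i => A1 i j) := by
    rw [hTdef, Submodule.map_span, ← Set.range_comp]; rfl
  have hrA : rk A1 = finrank Hᵐᵒᵖ (T.map (LinearMap.snd Hᵐᵒᵖ (Fin n → H) (Fin p → H))) := by
    rw [hsnd]; rfl
  have hrB : rk (fromCols B1 A1) = finrank Hᵐᵒᵖ
      ((span Hᵐᵒᵖ (Set.range fun j : Fin m => fun i : Fin p => B1 i j) ⊔
        T.map (LinearMap.snd Hᵐᵒᵖ (Fin n → H) (Fin p → H)) : Submodule Hᵐᵒᵖ (Fin p → H))) := by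
    rw [rk_fromColumns, hsnd]
  have hrD : rk (fromRows D1 A1) = finrank Hᵐᵒᵖ T := by
    rw [rk_fromRows, hTdef]
  have epi : finrank Hᵐᵒᵖ (Fin n → H) = n := finrank_pi_H n
  have hIDY : ∀ (Y : Matrix (Fin n) (Fin m) H),
      rk (fromRows (fromCols Y D1) (fromCols B1 A1)) = finrank Hᵐᵒᵖ
        ((T ⊔ span Hᵐᵒᵖ (Set.range fun j : Fin m =>
          (((fun i => Y i j, fun i => B1 i j)) : (Fin n → H) × (Fin p → H)))) :
          Submodule Hᵐᵒᵖ ((Fin n → H) × (Fin p → H))) := by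
    intro Y
    rw [rk_fromRows]
    have hsplit : (fun j : Fin m ⊕ Fin q =>
        ((fun i => fromCols Y D1 i j, fun i => fromCols B1 A1 i j) :
          (Fin n → H) × (Fin p → H))) =
        Sum.elim (fun j => ((fun i => Y i j, fun i => B1 i j)))
          (fun j => ((fun i => D1 i j, fun i => A1 i j))) := by
      funext j; cases j <;> rfl
    rw [hsplit, Set.Sum.elim_range, Submodule.span_union, sup_comm, hTdef]
  refine ⟨⟨?_, ?_⟩, ?_, ?_⟩
  · -- max attained
    obtain ⟨y, hy⟩ := AL_max (K := Hᵐᵒᵖ) T (fun j (i : Fin p) => B1 i j)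
    refine ⟨Matrix.of fun i j => y j i, ?_⟩
    have h1 : rk (fromRows (fromCols (Matrix.of fun i j => y j i) D1) (fromCols B1 A1)) =
        min (n + rk (fromCols B1 A1)) (m + rk (fromRows D1 A1)) := by
      rw [hrB, hrD]
      rw [epi] at hy
      exact (hIDY (Matrix.of fun i j => y j i)).trans hy
    rw [h1]
    omega
  · -- max upper bound
    intro Y
    have h1 : rk (fromRows (fromCols Y D1) (fromCols B1 A1)) ≤
        min (n + rk (fromCols B1 A1)) (m + rk (fromRows D1 A1)) := by
      rw [hrB, hrD]
      have hub := AL_ub T (fun j (i : Fin p) => B1 i j) (fun j (i : Fin n) => Y i j)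
          (fun Q => finrank_prod_top Q)
      rw [epi] at hub
      exact (hIDY Y).trans_le hub
    omega
  · -- min attained
    obtain ⟨y, hy⟩ := AL_min (K := Hᵐᵒᵖ) T (fun j (i : Fin p) => B1 i j)
    refine ⟨Matrix.of fun i j => y j i, ?_⟩
    have h1 : rk (fromRows (fromCols (Matrix.of fun i j => y j i) D1) (fromCols B1 A1))
        + rk A1 = rk (fromCols B1 A1) + rk (fromRows D1 A1) := by
      rw [hrA, hrB, hrD]
      exact ((hIDY (Matrix.of fun i j => y j i)).symm ▸ hy :)
    omega
  · -- min lower bound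
    intro Y
    have h1 : rk (fromCols B1 A1) + rk (fromRows D1 A1) ≤
        rk (fromRows (fromCols Y D1) (fromCols B1 A1)) + rk A1 := by
      rw [hrA, hrB, hrD, hIDY Y]
      exact AL_lb T (fun j (i : Fin p) => B1 i j) (fun j (i : Fin n) => Y i j)
    omega
end

section
/- If there exist quaternion matrices X ∈ ℍ^{p1×q1}, Y ∈ ℍ^{p2×q2}, Z ∈ ℍ^{p3×q3} such that BXE + CYF + DZG = A, then r([A B C D; E 0 0 0; F 0 0 0; G 0 0 0]) = r([B C D]) + r([E; F; G]). -/
open Matrix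

namespace RkAux

/-- A submodule product is linearly equivalent to the product of the submodules. -/
def myProdEquiv {R M M₂ : Type*} [Semiring R] [AddCommMonoid M] [AddCommMonoid M₂]
    [Module R M] [Module R M₂] (p : Submodule R M) (q : Submodule R M₂) :
    (p.prod q) ≃ₗ[R] p × q where
  toFun x := (⟨x.1.1, x.2.1⟩, ⟨x.1.2, x.2.2⟩)
  map_add' _ _ := rfl
  map_smul' _ _ := rfl
  invFun u := ⟨(u.1.1, u.2.1), ⟨u.1.2, u.2.2⟩⟩
  left_inv _ := rfl
  right_inv _ := rfl

/-- Associativity reshuffle of a four-fold sum. -/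
def assoc4 (a b c d : Type) : ((a ⊕ b) ⊕ c) ⊕ d ≃ a ⊕ ((b ⊕ c) ⊕ d) where
  toFun x := match x with
    | .inl (.inl (.inl x)) => .inl x
    | .inl (.inl (.inr x)) => .inr (.inl (.inl x))
    | .inl (.inr x) => .inr (.inl (.inr x))
    | .inr x => .inr (.inr x)
  invFun x := match x with
    | .inl x => .inl (.inl (.inl x))
    | .inr (.inl (.inl x)) => .inl (.inl (.inr x))
    | .inr (.inl (.inr x)) => .inl (.inr x)
    | .inr (.inr x) => .inr x
  left_inv x := by rcases x with (((x | x) | x) | x) <;> rfl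
  right_inv x := by rcases x with (x | ((x | x) | x)) <;> rfl

variable {α β γ δ : Type} [Fintype α] [Fintype β] [Fintype γ] [Fintype δ]

/-- `rk` is invariant under simultaneous reindexing of rows and columns. -/
lemma rk_submatrix {α' β' : Type} [Fintype α'] [Fintype β'] (M : Matrix α β H)
    (eR : α' ≃ α) (eC : β' ≃ β) : rk (M.submatrix eR eC) = rk M := by
  classical
  set L := LinearEquiv.funCongrLeft Hᵐᵒᵖ H eR with hL
  have key : (Set.range fun j : β' => fun i : α' => M.submatrix eR eC i j)
      = (L : (α → H) →ₗ[Hᵐᵒᵖ] (α' → H)) '' (Set.range fun j : β => fun i : α => M i j) := by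
    rw [← Set.range_comp]
    have h2 : ((L : (α → H) →ₗ[Hᵐᵒᵖ] (α' → H)) ∘ fun j : β => fun i : α => M i j) ∘ eC
        = fun j : β' => fun i : α' => M.submatrix eR eC i j := rfl
    rw [← h2, Function.Surjective.range_comp eC.surjective]
  rw [rk, rk, key, Submodule.span_image, LinearEquiv.finrank_map_eq]

/-- Main block lemma: if `A = Bm * W * Em` then
`rk [A Bm; Em 0] = rk Bm + rk Em`. -/
lemma rk_fromBlocks (A : Matrix α β H) (Bm : Matrix α δ H) (Em : Matrix γ β H)
    (W : Matrix δ γ H) (hA : A = Bm * W * Em) :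
    rk (fromBlocks A Bm Em 0) = rk Bm + rk Em := by
  classical
  set f1 : β → (α ⊕ γ → H) := fun j => Sum.elim (fun i => A i j) (fun i => Em i j) with hf1
  set f2 : δ → (α ⊕ γ → H) := fun k => Sum.elim (fun i => Bm i k) 0 with hf2
  set d1 : β → (α ⊕ γ → H) := fun j => Sum.elim 0 (fun i => Em i j) with hd1
  -- columns of the block matrix
  have hcols : (fun j : β ⊕ δ => fun i : α ⊕ γ => fromBlocks A Bm Em (0 : Matrix γ δ H) i j)
      = Sum.elim f1 f2 := by
    funext j
    rcases j with j | j <;> · funext i; rcases i with i | i <;> rfl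
  -- key linear relation
  have hrel : ∀ j : β, f1 j = d1 j + ∑ k : δ, MulOpposite.op ((W * Em) k j) • f2 k := by
    intro j
    funext i
    rcases i with i | i
    · have : A i j = ∑ k : δ, Bm i k * (W * Em) k j := by
        rw [hA, Matrix.mul_assoc]; rfl
      simp [hf1, hd1, hf2, this, Finset.sum_apply, MulOpposite.smul_eq_mul_unop]
    · simp [hf1, hd1, hf2, Finset.sum_apply, MulOpposite.smul_eq_mul_unop]
  -- span equality by column operations
  have hspan : Submodule.span Hᵐᵒᵖ (Set.range f1 ∪ Set.range f2)
      = Submodule.span Hᵐᵒᵖ (Set.range d1 ∪ Set.range f2) := by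
    refine le_antisymm (Submodule.span_le.2 ?_) (Submodule.span_le.2 ?_)
    · rintro v (⟨j, rfl⟩ | ⟨k, rfl⟩)
      · rw [hrel j]
        refine Submodule.add_mem _ (Submodule.subset_span (Or.inl ⟨j, rfl⟩)) ?_
        exact Submodule.sum_mem _ fun k _ =>
          Submodule.smul_mem _ _ (Submodule.subset_span (Or.inr ⟨k, rfl⟩))
      · exact Submodule.subset_span (Or.inr ⟨k, rfl⟩)
    · rintro v (⟨j, rfl⟩ | ⟨k, rfl⟩)
      · have hd : d1 j = f1 j - ∑ k : δ, MulOpposite.op ((W * Em) k j) • f2 k := by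
          rw [hrel j]; abel
        rw [hd]
        refine Submodule.sub_mem _ (Submodule.subset_span (Or.inl ⟨j, rfl⟩)) ?_
        exact Submodule.sum_mem _ fun k _ =>
          Submodule.smul_mem _ _ (Submodule.subset_span (Or.inr ⟨k, rfl⟩))
      · exact Submodule.subset_span (Or.inr ⟨k, rfl⟩)
  -- compute the rank of the decoupled span
  set Ls := LinearEquiv.sumArrowLequivProdArrow α γ Hᵐᵒᵖ H with hLs
  have himg : (Ls : (α ⊕ γ → H) →ₗ[Hᵐᵒᵖ] (α → H) × (γ → H)) '' (Set.range d1 ∪ Set.range f2)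
      = LinearMap.inl Hᵐᵒᵖ (α → H) (γ → H) '' (Set.range fun k : δ => fun i : α => Bm i k)
      ∪ LinearMap.inr Hᵐᵒᵖ (α → H) (γ → H) '' (Set.range fun j : β => fun i : γ => Em i j) := by
    rw [Set.image_union, ← Set.range_comp, ← Set.range_comp, ← Set.range_comp, ← Set.range_comp,
      Set.union_comm]
    congr 1
  haveI : Module.Finite Hᵐᵒᵖ
      (Submodule.span Hᵐᵒᵖ (Set.range fun k : δ => fun i : α => Bm i k)) :=
    FiniteDimensional.span_of_finite _ (Set.finite_range _)
  haveI : Module.Finite Hᵐᵒᵖ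
      (Submodule.span Hᵐᵒᵖ (Set.range fun j : β => fun i : γ => Em i j)) :=
    FiniteDimensional.span_of_finite _ (Set.finite_range _)
  calc rk (fromBlocks A Bm Em 0)
      = Module.finrank Hᵐᵒᵖ (Submodule.span Hᵐᵒᵖ (Set.range d1 ∪ Set.range f2)) := by
        rw [rk, hcols, Set.Sum.elim_range, hspan]
    _ = Module.finrank Hᵐᵒᵖ ((Submodule.span Hᵐᵒᵖ (Set.range d1 ∪ Set.range f2)).map
          (Ls : (α ⊕ γ → H) →ₗ[Hᵐᵒᵖ] (α → H) × (γ → H))) := (LinearEquiv.finrank_map_eq _ _).symm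
    _ = rk Bm + rk Em := by
        rw [← Submodule.span_image, himg, LinearMap.span_inl_union_inr]
        rw [(myProdEquiv _ _).finrank_eq, Module.finrank_prod]
        rfl

end RkAux

theorem stmt_6 {m n p1 p2 p3 q1 q2 q3 : ℕ}
    (A : Matrix (Fin m) (Fin n) H) (B : Matrix (Fin m) (Fin p1) H)
    (C : Matrix (Fin m) (Fin p2) H) (D : Matrix (Fin m) (Fin p3) H)
    (E : Matrix (Fin q1) (Fin n) H) (F : Matrix (Fin q2) (Fin n) H)
    (G : Matrix (Fin q3) (Fin n) H)
    (hcon : ∃ (X : Matrix (Fin p1) (Fin q1) H) (Y : Matrix (Fin p2) (Fin q2) H) (Z : Matrix (Fin p3) (Fin q3) H), B * X * E + C * Y * F + D * Z * G = A) :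
    rk (Matrix.fromRows (Matrix.fromRows (Matrix.fromRows (Matrix.fromCols (Matrix.fromCols (Matrix.fromCols A B) C) D) (Matrix.fromCols (Matrix.fromCols (Matrix.fromCols E (0 : Matrix (Fin q1) (Fin p1) H)) (0 : Matrix (Fin q1) (Fin p2) H)) (0 : Matrix (Fin q1) (Fin p3) H))) (Matrix.fromCols (Matrix.fromCols (Matrix.fromCols F (0 : Matrix (Fin q2) (Fin p1) H)) (0 : Matrix (Fin q2) (Fin p2) H)) (0 : Matrix (Fin q2) (Fin p3) H))) (Matrix.fromCols (Matrix.fromCols (Matrix.fromCols G (0 : Matrix (Fin q3) (Fin p1) H)) (0 : Matrix (Fin q3) (Fin p2) H)) (0 : Matrix (Fin q3) (Fin p3) H))) = rk (Matrix.fromCols (Matrix.fromCols B C) D) + rk (Matrix.fromRows (Matrix.fromRows E F) G) := by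
  classical
  obtain ⟨X, Y, Z, hXYZ⟩ := hcon
  set B' := Matrix.fromCols (Matrix.fromCols B C) D with hB'
  set E' := Matrix.fromRows (Matrix.fromRows E F) G with hE'
  set W : Matrix ((Fin p1 ⊕ Fin p2) ⊕ Fin p3) ((Fin q1 ⊕ Fin q2) ⊕ Fin q3) H :=
    fromBlocks (fromBlocks X 0 0 Y) 0 0 Z with hW
  have hA : A = B' * W * E' := by
    rw [hB', hW, hE']
    rw [fromCols_mul_fromBlocks, fromCols_mul_fromBlocks]
    simp only [Matrix.mul_zero, Matrix.zero_mul, add_zero, zero_add]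
    rw [fromCols_mul_fromRows, fromCols_mul_fromRows]
    rw [← hXYZ]
  have hsub : (Matrix.fromRows (Matrix.fromRows (Matrix.fromRows (Matrix.fromCols (Matrix.fromCols (Matrix.fromCols A B) C) D) (Matrix.fromCols (Matrix.fromCols (Matrix.fromCols E (0 : Matrix (Fin q1) (Fin p1) H)) (0 : Matrix (Fin q1) (Fin p2) H)) (0 : Matrix (Fin q1) (Fin p3) H))) (Matrix.fromCols (Matrix.fromCols (Matrix.fromCols F (0 : Matrix (Fin q2) (Fin p1) H)) (0 : Matrix (Fin q2) (Fin p2) H)) (0 : Matrix (Fin q2) (Fin p3) H))) (Matrix.fromCols (Matrix.fromCols (Matrix.fromCols G (0 : Matrix (Fin q3) (Fin p1) H)) (0 : Matrix (Fin q3) (Fin p2) H)) (0 : Matrix (Fin q3) (Fin p3) H)))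
      = (fromBlocks A B' E' 0).submatrix (RkAux.assoc4 (Fin m) (Fin q1) (Fin q2) (Fin q3))
          (RkAux.assoc4 (Fin n) (Fin p1) (Fin p2) (Fin p3)) := by
    refine Matrix.ext fun i j => ?_
    rcases i with (((i | i) | i) | i) <;> rcases j with (((j | j) | j) | j) <;> rfl
  rw [hsub, RkAux.rk_submatrix, RkAux.rk_fromBlocks A B' E' W hA]
end
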